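/- arXiv:1311.5167 — 6 statements merged into one kernel-verified Lean document; each statement's English description precedes it below -/
import Mathlib

section
/- If g : ℝ^m → ℝ is a bounded C^{1,1} function (its gradient is Lipschitz), then for almost every x ∈ ℝ^m there exists a symmetric matrix ∇²g(x) such that g(x+h) - g(x) = ⟨∇g(x), h⟩ + (1/2)⟨∇²g(x)h, h⟩ + o(|h|²) as h → 0. -/
open MeasureTheory Asymptotics
open scoped Topology

/-- Second-order Rademacher theorem: a bounded `C^{1,1}` function on `ℝ^m` admits, at almost
every point, a symmetric second-order Taylor expansion. -/
theorem second_order_rademacher (m : ℕ) (hm : 1 ≤ m)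
    (g : EuclideanSpace ℝ (Fin m) → ℝ)
    (M : ℝ) (hbd : ∀ x, |g x| ≤ M)
    (hC1 : ContDiff ℝ 1 g)
    (K : NNReal) (hlip : LipschitzWith K (fderiv ℝ g)) :
    ∀ᵐ x ∂(volume : Measure (EuclideanSpace ℝ (Fin m))),
      ∃ Q : EuclideanSpace ℝ (Fin m) →L[ℝ] EuclideanSpace ℝ (Fin m),
        (∀ u v, (inner ℝ (Q u) v : ℝ) = (inner ℝ u (Q v) : ℝ)) ∧
        (fun h => g (x + h) - g x - fderiv ℝ g x h - (1 / 2) * (inner ℝ (Q h) h : ℝ)) =o[𝓝 0]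
          (fun h => ‖h‖ ^ 2) := by
  have hdg : Differentiable ℝ g := hC1.differentiable one_ne_zero
  filter_upwards [hlip.ae_differentiableAt (μ := volume)] with x hx
  set f' := fderiv ℝ g with hf'
  set B := fderiv ℝ f' x with hBdef
  set A : EuclideanSpace ℝ (Fin m) →L[ℝ] EuclideanSpace ℝ (Fin m) :=
    ((InnerProductSpace.toDual ℝ (EuclideanSpace ℝ (Fin m))).symm.toContinuousLinearEquiv.toContinuousLinearMap).comp B
    with hAdef
  have hA : ∀ h v : EuclideanSpace ℝ (Fin m), (inner ℝ (A h) v : ℝ) = B h v := by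
    intro h v
    simp [hAdef, InnerProductSpace.toDual_symm_apply]
  set Q : EuclideanSpace ℝ (Fin m) →L[ℝ] EuclideanSpace ℝ (Fin m) :=
    (1/2 : ℝ) • (A + ContinuousLinearMap.adjoint A) with hQdef
  have hQsymm : ∀ u v : EuclideanSpace ℝ (Fin m), (inner ℝ (Q u) v : ℝ) = inner ℝ u (Q v) := by
    intro u v
    simp only [hQdef, ContinuousLinearMap.smul_apply, ContinuousLinearMap.add_apply,
      real_inner_smul_left, real_inner_smul_right, inner_add_left, inner_add_right,
      ContinuousLinearMap.adjoint_inner_left, ContinuousLinearMap.adjoint_inner_right]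
    ring
  have hQh : ∀ h : EuclideanSpace ℝ (Fin m), (inner ℝ (Q h) h : ℝ) = B h h := by
    intro h
    simp only [hQdef, ContinuousLinearMap.smul_apply, ContinuousLinearMap.add_apply,
      real_inner_smul_left, inner_add_left, ContinuousLinearMap.adjoint_inner_left]
    linarith [real_inner_comm h (A h), hA h h]
  refine ⟨Q, hQsymm, ?_⟩
  have key : (fun h : EuclideanSpace ℝ (Fin m) => g (x + h) - g x - f' x h - (1/2) * (B h h))
      =o[𝓝 0] (fun h : EuclideanSpace ℝ (Fin m) => ‖h‖ ^ 2) := by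
    rw [Asymptotics.isLittleO_iff]
    intro ε hε
    have hd := hx.hasFDerivAt
    rw [hasFDerivAt_iff_isLittleO_nhds_zero] at hd
    have h0 := (Asymptotics.isLittleO_iff.1 hd) hε
    obtain ⟨δ, hδ, hδ'⟩ := Metric.eventually_nhds_iff.1 h0
    rw [Metric.eventually_nhds_iff]
    refine ⟨δ, hδ, fun h hh => ?_⟩
    rw [dist_zero_right] at hh
    set u : ℝ → ℝ := fun t => g (x + t • h) - t * (f' x h) - t^2/2 * (B h h) with hu
    have hderiv : ∀ t : ℝ, HasDerivAt u (f' (x + t • h) h - f' x h - t * (B h h)) t := by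
      intro t
      have h1 : HasDerivAt (fun t : ℝ => x + t • h) h t := by
        simpa using ((hasDerivAt_id t).smul_const h).const_add x
      have h2 : HasDerivAt (fun t : ℝ => g (x + t • h)) (f' (x + t • h) h) t :=
        (hdg (x + t • h)).hasFDerivAt.comp_hasDerivAt t h1
      have h3 : HasDerivAt (fun t : ℝ => t * (f' x h)) (f' x h) t := by
        simpa using (hasDerivAt_id t).mul_const (f' x h)
      have h4 : HasDerivAt (fun t : ℝ => t^2/2 * (B h h)) (t * (B h h)) t := by
        have := ((hasDerivAt_pow 2 t).div_const 2).mul_const (B h h)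
        simpa [mul_comm] using this
      exact (h2.sub h3).sub h4
    have hbound : ∀ t ∈ Set.Ico (0:ℝ) 1,
        ‖f' (x + t • h) h - f' x h - t * (B h h)‖ ≤ ε * ‖h‖^2 := by
      intro t ht
      have ht0 := ht.1
      have heq : f' (x + t • h) h - f' x h - t * (B h h)
          = (f' (x + t • h) - f' x - B (t • h)) h := by
        simp [ContinuousLinearMap.sub_apply, smul_eq_mul]
      rw [heq]
      have hth : ‖t • h‖ ≤ ‖h‖ := by
        rw [norm_smul, Real.norm_eq_abs, abs_of_nonneg ht0]
        calc t * ‖h‖ ≤ 1 * ‖h‖ := by gcongr; exact le_of_lt ht.2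
          _ = ‖h‖ := one_mul _
      have hles := hδ' (y := t • h) (by rw [dist_zero_right]; exact lt_of_le_of_lt hth hh)
      calc ‖(f' (x + t • h) - f' x - B (t • h)) h‖
          ≤ ‖f' (x + t • h) - f' x - B (t • h)‖ * ‖h‖ :=
            ContinuousLinearMap.le_opNorm _ h
        _ ≤ (ε * ‖t • h‖) * ‖h‖ := mul_le_mul_of_nonneg_right hles (norm_nonneg h)
        _ ≤ (ε * ‖h‖) * ‖h‖ := by gcongr
        _ = ε * ‖h‖^2 := by ring
    have hmvt := norm_image_sub_le_of_norm_deriv_le_segment'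
      (f := u) (f' := fun t => f' (x + t • h) h - f' x h - t * (B h h))
      (fun t ht => (hderiv t).hasDerivWithinAt) hbound 1 (Set.right_mem_Icc.2 zero_le_one)
    have hu1 : u 1 - u 0 = g (x + h) - g x - f' x h - (1/2) * (B h h) := by
      simp [hu]
      ring
    calc ‖g (x + h) - g x - f' x h - (1/2) * (B h h)‖ = ‖u 1 - u 0‖ := by rw [hu1]
      _ ≤ ε * ‖h‖^2 * (1 - 0) := hmvt
      _ = ε * ‖‖h‖^2‖ := by
          rw [Real.norm_eq_abs, abs_of_nonneg (by positivity)]; ring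
  have heqf : (fun h : EuclideanSpace ℝ (Fin m) =>
      g (x + h) - g x - fderiv ℝ g x h - (1/2) * (inner ℝ (Q h) h : ℝ))
      = (fun h : EuclideanSpace ℝ (Fin m) => g (x + h) - g x - f' x h - (1/2) * (B h h)) := by
    funext h
    rw [hQh h]
  rw [show (1:ℝ)/2 = 1/2 from rfl] at heqf
  exact heqf ▸ key
end

section
/- Let D ⊂ ℂ^n be a bounded domain of class C^{1,1} that is strongly ℂ-linearly convex, and define d(w,z) = |⟨∂ρ(w), w−z⟩|^{1/2} for w, z ∈ bD. Then d is a quasi-metric: (a) d(w,z) = 0 iff w = z; (b) d(w,z) ≈ d(z,w); (c) d(w,z) ≲ d(w,z') + d(z',z) for all w, z, z' ∈ bD. -/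
/-- The Leray pairing `Δ(w,z) = ⟨∂ρ(w), w−z⟩`. -/
noncomputable def cplxPair {n : ℕ}
    (pc : EuclideanSpace ℂ (Fin n) → EuclideanSpace ℂ (Fin n))
    (w z : EuclideanSpace ℂ (Fin n)) : ℂ :=
  ∑ j, pc w j * (w j - z j)

/-- The quasi-distance `d(w,z) = |Δ(w,z)|^{1/2}`. -/
noncomputable def lerayDist {n : ℕ}
    (pc : EuclideanSpace ℂ (Fin n) → EuclideanSpace ℂ (Fin n))
    (w z : EuclideanSpace ℂ (Fin n)) : ℝ :=
  Real.sqrt ‖cplxPair pc w z‖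

/-- Cauchy–Schwarz for the bilinear (non-conjugated) pairing on `ℂⁿ`. -/
lemma abs_sum_mul_le' {n : ℕ} (a b : EuclideanSpace ℂ (Fin n)) :
    ‖∑ j, a j * b j‖ ≤ ‖a‖ * ‖b‖ := by
  set u : EuclideanSpace ℂ (Fin n) := WithLp.toLp 2 (fun j => (starRingEnd ℂ) (a j)) with hu
  have h1 : (∑ j, a j * b j) = (inner ℂ u b : ℂ) := by
    simp [hu, PiLp.inner_apply, RCLike.inner_apply, mul_comm]
  have h2 : ‖u‖ = ‖a‖ := by
    simp [hu, EuclideanSpace.norm_eq]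
  rw [h1, ← h2]
  exact norm_inner_le_norm _ _

/-- The error term in comparing Leray pairings at nearby points. -/
lemma err_bound' {n : ℕ} (Kpc : NNReal)
    (pc : EuclideanSpace ℂ (Fin n) → EuclideanSpace ℂ (Fin n))
    (hpcLip : LipschitzWith Kpc pc)
    (w z' u v : EuclideanSpace ℂ (Fin n)) :
    ‖∑ j, (pc w j - pc z' j) * (u j - v j)‖ ≤ (Kpc : ℝ) * ‖w - z'‖ * ‖u - v‖ := by
  have h1 : ‖∑ j, (pc w j - pc z' j) * (u j - v j)‖
      ≤ ‖pc w - pc z'‖ * ‖u - v‖ := by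
    have := abs_sum_mul_le' (pc w - pc z') (u - v)
    simpa using this
  have h2 : ‖pc w - pc z'‖ ≤ (Kpc : ℝ) * ‖w - z'‖ := by
    have := hpcLip.dist_le_mul w z'
    simpa [dist_eq_norm] using this
  calc ‖∑ j, (pc w j - pc z' j) * (u j - v j)‖
      ≤ ‖pc w - pc z'‖ * ‖u - v‖ := h1
    _ ≤ ((Kpc : ℝ) * ‖w - z'‖) * ‖u - v‖ :=
        mul_le_mul_of_nonneg_right h2 (norm_nonneg _)
    _ = (Kpc : ℝ) * ‖w - z'‖ * ‖u - v‖ := by ring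

/-- For a bounded, strongly ℂ-linearly convex `C^{1,1}` domain, `d(w,z) = |⟨∂ρ(w), w−z⟩|^{1/2}`
is a quasi-metric on the boundary: (a) `d(w,z) = 0 ↔ w = z`; (b) `d(w,z) ≈ d(z,w)`;
(c) `d(w,z) ≲ d(w,z') + d(z',z)`. -/
theorem lerayDist_quasi_metric (n : ℕ) (hn : 2 ≤ n)
    (ρ : EuclideanSpace ℂ (Fin n) → ℝ)
    (D : Set (EuclideanSpace ℂ (Fin n)))
    (hD : D = {z | ρ z < 0}) (hbdd : Bornology.IsBounded D)
    (hρ1 : ContDiff ℝ 1 ρ)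
    (pc : EuclideanSpace ℂ (Fin n) → EuclideanSpace ℂ (Fin n))
    (hpc : ∀ w v, fderiv ℝ ρ w v = 2 * (∑ j, pc w j * v j).re)
    (Kpc : NNReal) (hpcLip : LipschitzWith Kpc pc)
    (hgrad : ∀ w, ρ w = 0 → fderiv ℝ ρ w ≠ 0)
    (c₀ : ℝ) (hc₀ : 0 < c₀)
    (hconv : ∀ z, ρ z ≤ 0 → ∀ w, ρ w = 0 →
      c₀ * ‖w - z‖ ^ 2 ≤ ‖cplxPair pc w z‖) :
    (∀ w z, ρ w = 0 → ρ z = 0 → (lerayDist pc w z = 0 ↔ w = z)) ∧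
    (∃ C : ℝ, 0 < C ∧ ∀ w z, ρ w = 0 → ρ z = 0 →
      lerayDist pc w z ≤ C * lerayDist pc z w) ∧
    (∃ C : ℝ, 0 < C ∧ ∀ w z z', ρ w = 0 → ρ z = 0 → ρ z' = 0 →
      lerayDist pc w z ≤ C * (lerayDist pc w z' + lerayDist pc z' z)) := by
  have hK : (0:ℝ) ≤ (Kpc : ℝ) := Kpc.coe_nonneg
  set t : ℝ := (Kpc : ℝ) / c₀ with ht
  have htn : 0 ≤ t := div_nonneg hK hc₀.le
  have hKc : (0:ℝ) < 1 + t := by linarith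
  set C : ℝ := Real.sqrt (1 + t) with hC
  have hCpos : 0 < C := Real.sqrt_pos.mpr hKc
  refine ⟨?_, ⟨C, hCpos, ?_⟩, ⟨C, hCpos, ?_⟩⟩
  · -- (a)
    intro w z hw hz
    constructor
    · intro h
      have habs : ‖cplxPair pc w z‖ = 0 :=
        (Real.sqrt_eq_zero (norm_nonneg _)).mp h
      have h1 := hconv z hz.le w hw
      rw [habs] at h1
      have h2 : ‖w - z‖ ^ 2 = 0 := le_antisymm (by nlinarith) (sq_nonneg _)
      have h3 : w - z = 0 := norm_eq_zero.mp (by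
        have := pow_eq_zero_iff (n := 2) (by norm_num) |>.mp h2
        exact this)
      exact sub_eq_zero.mp h3
    · rintro rfl
      simp [lerayDist, cplxPair]
  · -- (b) quasi-symmetry
    intro w z hw hz
    have hid : cplxPair pc w z + cplxPair pc z w
        = ∑ j, (pc w j - pc z j) * (w j - z j) := by
      rw [cplxPair, cplxPair, ← Finset.sum_add_distrib]
      exact Finset.sum_congr rfl fun j _ => by ring
    have hE := err_bound' Kpc pc hpcLip w z w z
    have habs : ‖cplxPair pc w z‖
        ≤ ‖cplxPair pc z w‖ + (Kpc : ℝ) * ‖w - z‖ ^ 2 := by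
      have : cplxPair pc w z = (∑ j, (pc w j - pc z j) * (w j - z j)) - cplxPair pc z w := by
        rw [← hid]; ring
      rw [this]
      calc ‖_ - cplxPair pc z w‖
          ≤ ‖∑ j, (pc w j - pc z j) * (w j - z j)‖
            + ‖cplxPair pc z w‖ := by
            rw [sub_eq_add_neg]
            refine (norm_add_le _ _).trans ?_
            rw [norm_neg]
        _ ≤ ‖cplxPair pc z w‖ + (Kpc : ℝ) * ‖w - z‖ ^ 2 := by
            have : (Kpc : ℝ) * ‖w - z‖ * ‖w - z‖ = (Kpc : ℝ) * ‖w - z‖ ^ 2 := by ring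
            linarith [hE, this ▸ hE]
    have hcw := hconv w hw.le z hz
    rw [norm_sub_rev] at hcw
    have h3 : (Kpc : ℝ) * ‖w - z‖ ^ 2 ≤ t * ‖cplxPair pc z w‖ := by
      have h4 := mul_le_mul_of_nonneg_left hcw htn
      calc (Kpc : ℝ) * ‖w - z‖ ^ 2 = t * (c₀ * ‖w - z‖ ^ 2) := by
            rw [ht]; field_simp
        _ ≤ t * ‖cplxPair pc z w‖ := h4
    have h5 : ‖cplxPair pc w z‖ ≤ (1 + t) * ‖cplxPair pc z w‖ := by
      nlinarith [habs, h3]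
    have h6 := Real.sqrt_le_sqrt h5
    rw [Real.sqrt_mul hKc.le] at h6
    exact h6
  · -- (c) quasi-triangle inequality
    intro w z z' hw hz hz'
    set a : ℝ := lerayDist pc w z' with ha
    set b : ℝ := lerayDist pc z' z with hb
    have han : 0 ≤ a := Real.sqrt_nonneg _
    have hbn : 0 ≤ b := Real.sqrt_nonneg _
    have ha2 : a ^ 2 = ‖cplxPair pc w z'‖ :=
      Real.sq_sqrt (norm_nonneg _)
    have hb2 : b ^ 2 = ‖cplxPair pc z' z‖ :=
      Real.sq_sqrt (norm_nonneg _)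
    have hu : c₀ * ‖w - z'‖ ^ 2 ≤ a ^ 2 := ha2 ▸ hconv z' hz'.le w hw
    have hv : c₀ * ‖z' - z‖ ^ 2 ≤ b ^ 2 := hb2 ▸ hconv z hz.le z' hz'
    have hid : cplxPair pc w z
        = cplxPair pc w z' + cplxPair pc z' z
          + ∑ j, (pc w j - pc z' j) * (z' j - z j) := by
      rw [cplxPair, cplxPair, cplxPair, ← Finset.sum_add_distrib, ← Finset.sum_add_distrib]
      exact Finset.sum_congr rfl fun j _ => by ring
    have hE := err_bound' Kpc pc hpcLip w z' z' z
    -- c₀ * (‖w-z'‖*‖z'-z‖) ≤ a*b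
    have hprod : c₀ * (‖w - z'‖ * ‖z' - z‖) ≤ a * b := by
      have hm : (c₀ * (‖w - z'‖ * ‖z' - z‖)) ^ 2 ≤ (a * b) ^ 2 := by
        nlinarith [norm_nonneg (w - z'), norm_nonneg (z' - z), sq_nonneg ‖w - z'‖,
          sq_nonneg ‖z' - z‖, mul_le_mul hu hv (by positivity) (sq_nonneg a)]
      have := Real.sqrt_le_sqrt hm
      rwa [Real.sqrt_sq (by positivity), Real.sqrt_sq (by positivity)] at this
    have hEst : (Kpc : ℝ) * ‖w - z'‖ * ‖z' - z‖ ≤ t * (a * b) := by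
      have h4 := mul_le_mul_of_nonneg_left hprod htn
      calc (Kpc : ℝ) * ‖w - z'‖ * ‖z' - z‖ = t * (c₀ * (‖w - z'‖ * ‖z' - z‖)) := by
            rw [ht]; field_simp
        _ ≤ t * (a * b) := h4
    have habs : ‖cplxPair pc w z‖ ≤ a ^ 2 + b ^ 2 + t * (a * b) := by
      rw [hid]
      calc ‖cplxPair pc w z' + cplxPair pc z' z
            + ∑ j, (pc w j - pc z' j) * (z' j - z j)‖
          ≤ ‖cplxPair pc w z'‖ + ‖cplxPair pc z' z‖
            + ‖∑ j, (pc w j - pc z' j) * (z' j - z j)‖ := by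
            refine (norm_add_le _ _).trans ?_
            linarith [norm_add_le (cplxPair pc w z') (cplxPair pc z' z)]
        _ ≤ a ^ 2 + b ^ 2 + t * (a * b) := by
            rw [← ha2, ← hb2]
            linarith [hE.trans hEst]
    have hfin : ‖cplxPair pc w z‖ ≤ (1 + t) * (a + b) ^ 2 := by
      nlinarith [mul_nonneg han hbn, mul_nonneg htn (mul_nonneg han hbn),
        mul_nonneg htn (sq_nonneg (a + b))]
    have h6 := Real.sqrt_le_sqrt hfin
    rw [Real.sqrt_mul hKc.le, Real.sqrt_sq (by positivity)] at h6
    exact h6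
end

section
/- With D ⊂ ℂ^n bounded, strongly ℂ-linearly convex and of class C^{1,1}, and d(w,z) = |⟨∂ρ(w), w−z⟩|^{1/2}, one has |w−z| ≲ d(w,z) ≲ |w−z|^{1/2} for all w, z ∈ bD. -/
/-- A boundary point of `{ρ < 0}` with nonvanishing gradient lies in the closure. -/
lemma boundary_mem_closure_neg {n : ℕ} (ρ : EuclideanSpace ℂ (Fin n) → ℝ)
    (hρ1 : ContDiff ℝ 1 ρ) (w : EuclideanSpace ℂ (Fin n)) (hw : ρ w = 0)
    (hgrad : fderiv ℝ ρ w ≠ 0) : w ∈ closure {z | ρ z < 0} := by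
  obtain ⟨v, hv⟩ : ∃ v, fderiv ℝ ρ w v ≠ 0 := by
    by_contra h; push_neg at h; exact hgrad (ContinuousLinearMap.ext fun v => by simp [h v])
  set v' : EuclideanSpace ℂ (Fin n) := if fderiv ℝ ρ w v < 0 then v else -v with hv'
  have hneg : fderiv ℝ ρ w v' < 0 := by
    rw [hv']; split_ifs with h
    · exact h
    · simp only [map_neg]
      push_neg at h
      cases lt_or_eq_of_le h with
      | inl h => linarith
      | inr h => exact absurd h.symm hv
  have hdiff := (hρ1.differentiable one_ne_zero).differentiableAt (x := w)
  have hd : HasDerivAt (fun t : ℝ => ρ (w + t • v')) (fderiv ℝ ρ w v') 0 := by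
    have h2 : HasDerivAt (fun t : ℝ => w + t • v') v' 0 := by
      simpa using ((hasDerivAt_id (0:ℝ)).smul_const v').const_add w
    have h1 : HasFDerivAt ρ (fderiv ℝ ρ w) (w + (0:ℝ) • v') := by
      simpa using hdiff.hasFDerivAt
    exact h1.comp_hasDerivAt 0 h2
  rw [hasDerivAt_iff_tendsto_slope] at hd
  rw [Metric.mem_closure_iff]
  intro ε hε
  have hslope : ∀ᶠ t in nhdsWithin (0:ℝ) {0}ᶜ, slope (fun t : ℝ => ρ (w + t • v')) 0 t < 0 :=
    hd.eventually_lt_const hneg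
  have hsmall : ∀ᶠ t in nhdsWithin (0:ℝ) {0}ᶜ, |t| < ε / (‖v'‖ + 1) := by
    apply eventually_nhdsWithin_of_eventually_nhds
    have : Filter.Tendsto (fun t : ℝ => |t|) (nhds 0) (nhds 0) := by
      simpa using continuous_abs.tendsto (0:ℝ)
    exact this.eventually_lt_const (by positivity)
  have hgt : ∀ᶠ t in nhdsWithin (0:ℝ) (Set.Ioi 0),
      slope (fun t : ℝ => ρ (w + t • v')) 0 t < 0 ∧ |t| < ε / (‖v'‖ + 1) := by
    apply Filter.Eventually.filter_mono (nhdsWithin_mono 0 ?_) (hslope.and hsmall)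
    intro t ht; exact ne_of_gt ht
  obtain ⟨t, ht, htpos⟩ := (hgt.and self_mem_nhdsWithin).exists
  obtain ⟨hts, htsm⟩ := ht
  have htpos : 0 < t := htpos
  have hρt : ρ (w + t • v') < 0 := by
    simp only [slope, vsub_eq_sub, sub_zero, zero_smul, add_zero, hw, smul_eq_mul] at hts
    have h1 := mul_neg_of_pos_of_neg htpos hts
    have h2 : t * (t⁻¹ * ρ (w + t • v')) = ρ (w + t • v') := by
      field_simp
    linarith
  refine ⟨w + t • v', hρt, ?_⟩
  rw [dist_eq_norm]
  have : ‖w - (w + t • v')‖ = t * ‖v'‖ := by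
    simp [norm_smul, abs_of_pos htpos]
  rw [this]
  have hb : t < ε / (‖v'‖ + 1) := by rwa [abs_of_pos htpos] at htsm
  have hv'n : (0:ℝ) ≤ ‖v'‖ := norm_nonneg _
  calc t * ‖v'‖ ≤ t * (‖v'‖ + 1) := by nlinarith
    _ < ε / (‖v'‖ + 1) * (‖v'‖ + 1) := by
        apply mul_lt_mul_of_pos_right hb; linarith
    _ = ε := by field_simp

/-- Cauchy–Schwarz for the Leray pairing. -/
lemma cplxPair_abs_le {n : ℕ}
    (pc : EuclideanSpace ℂ (Fin n) → EuclideanSpace ℂ (Fin n))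
    (w z : EuclideanSpace ℂ (Fin n)) :
    ‖cplxPair pc w z‖ ≤ ‖pc w‖ * ‖w - z‖ := by
  set a : EuclideanSpace ℂ (Fin n) := WithLp.toLp 2 (fun j => starRingEnd ℂ (pc w j)) with ha
  have h1 : cplxPair pc w z = inner ℂ a (w - z) := by
    simp only [cplxPair, PiLp.inner_apply, ha]
    apply Finset.sum_congr rfl
    intro j _
    simp [RCLike.inner_apply, mul_comm]
  have h2 : ‖a‖ = ‖pc w‖ := by
    simp only [EuclideanSpace.norm_eq, ha]
    congr 1
    apply Finset.sum_congr rfl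
    intro j _
    simp
  have h3 : ‖(inner ℂ a (w - z) : ℂ)‖ ≤ ‖a‖ * ‖w - z‖ := norm_inner_le_norm a (w - z)
  rw [h1, h2] at *
  exact h3

/-- For a bounded, strongly ℂ-linearly convex `C^{1,1}` domain,
`|w−z| ≲ d(w,z) ≲ |w−z|^{1/2}` on the boundary. -/
theorem lerayDist_compare_euclidean (n : ℕ) (hn : 2 ≤ n)
    (ρ : EuclideanSpace ℂ (Fin n) → ℝ)
    (D : Set (EuclideanSpace ℂ (Fin n)))
    (hD : D = {z | ρ z < 0}) (hbdd : Bornology.IsBounded D)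
    (hρ1 : ContDiff ℝ 1 ρ)
    (pc : EuclideanSpace ℂ (Fin n) → EuclideanSpace ℂ (Fin n))
    (hpc : ∀ w v, fderiv ℝ ρ w v = 2 * (∑ j, pc w j * v j).re)
    (Kpc : NNReal) (hpcLip : LipschitzWith Kpc pc)
    (hgrad : ∀ w, ρ w = 0 → fderiv ℝ ρ w ≠ 0)
    (c₀ : ℝ) (hc₀ : 0 < c₀)
    (hconv : ∀ z, ρ z ≤ 0 → ∀ w, ρ w = 0 →
      c₀ * ‖w - z‖ ^ 2 ≤ ‖cplxPair pc w z‖) :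
    ∃ C : ℝ, 0 < C ∧ ∀ w z, ρ w = 0 → ρ z = 0 →
      ‖w - z‖ ≤ C * lerayDist pc w z ∧
      lerayDist pc w z ≤ C * Real.sqrt ‖w - z‖ := by
  -- a radius bound for the closure of D
  obtain ⟨R, hR⟩ := (hbdd.closure).subset_closedBall 0
  set M : ℝ := ‖pc 0‖ + (Kpc : ℝ) * max R 0 + 1 with hM
  have hMpos : 0 < M := by positivity
  -- boundary points are in closure D, hence bounded, hence ‖pc w‖ ≤ M
  have hpcbd : ∀ w, ρ w = 0 → ‖pc w‖ ≤ M := by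
    intro w hw
    have hmem : w ∈ closure D := by
      rw [hD]; exact boundary_mem_closure_neg ρ hρ1 w hw (hgrad w hw)
    have hwR : ‖w‖ ≤ max R 0 := by
      have := hR hmem
      rw [Metric.mem_closedBall, dist_zero_right] at this
      exact this.trans (le_max_left _ _)
    have hlip : ‖pc w - pc 0‖ ≤ (Kpc : ℝ) * ‖w‖ := by
      have := hpcLip.dist_le_mul w 0
      simpa [dist_eq_norm] using this
    have : ‖pc w‖ ≤ ‖pc 0‖ + ‖pc w - pc 0‖ := by
      have := norm_add_le (pc 0) (pc w - pc 0)
      simpa using this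
    have hK : (Kpc : ℝ) * ‖w‖ ≤ (Kpc : ℝ) * max R 0 :=
      mul_le_mul_of_nonneg_left hwR Kpc.coe_nonneg
    rw [hM]; linarith
  refine ⟨max (Real.sqrt c₀)⁻¹ (Real.sqrt M), lt_max_of_lt_left (by positivity), ?_⟩
  intro w z hw hz
  have habs : (0:ℝ) ≤ ‖cplxPair pc w z‖ := norm_nonneg _
  constructor
  · -- left inequality
    have hc := hconv z (le_of_eq hz) w hw
    have h1 : Real.sqrt c₀ * ‖w - z‖ ≤ lerayDist pc w z := by
      rw [lerayDist]
      have : Real.sqrt c₀ * ‖w - z‖ = Real.sqrt (c₀ * ‖w - z‖ ^ 2) := by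
        rw [Real.sqrt_mul hc₀.le, Real.sqrt_sq (norm_nonneg _)]
      rw [this]
      exact Real.sqrt_le_sqrt hc
    have hsc : 0 < Real.sqrt c₀ := Real.sqrt_pos.mpr hc₀
    calc ‖w - z‖ = (Real.sqrt c₀)⁻¹ * (Real.sqrt c₀ * ‖w - z‖) := by field_simp
      _ ≤ (Real.sqrt c₀)⁻¹ * lerayDist pc w z := by
          exact mul_le_mul_of_nonneg_left h1 (by positivity)
      _ ≤ max (Real.sqrt c₀)⁻¹ (Real.sqrt M) * lerayDist pc w z := by
          apply mul_le_mul_of_nonneg_right (le_max_left _ _)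
          exact Real.sqrt_nonneg _
  · -- right inequality
    have h1 : ‖cplxPair pc w z‖ ≤ M * ‖w - z‖ := by
      calc ‖cplxPair pc w z‖ ≤ ‖pc w‖ * ‖w - z‖ := cplxPair_abs_le pc w z
        _ ≤ M * ‖w - z‖ := mul_le_mul_of_nonneg_right (hpcbd w hw) (norm_nonneg _)
    calc lerayDist pc w z ≤ Real.sqrt (M * ‖w - z‖) := Real.sqrt_le_sqrt h1
      _ = Real.sqrt M * Real.sqrt ‖w - z‖ := Real.sqrt_mul hMpos.le _
      _ ≤ max (Real.sqrt c₀)⁻¹ (Real.sqrt M) * Real.sqrt ‖w - z‖ := by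
          apply mul_le_mul_of_nonneg_right (le_max_right _ _)
          exact Real.sqrt_nonneg _
end

section
/- Neither implication in the chain 'strongly convex ⇒ strongly ℂ-linearly convex ⇒ strongly pseudo-convex' can be reversed: the domain in ℂ² defined by ρ̃(z) = |z₁|² − Im(z₂) + |z₂|⁴ is strongly ℂ-linearly convex near (0,0) but not strongly convex there, and the domain defined by ρ(z) = 2x₁² − y₁² − y₂ (z₁ = x₁ + iy₁, z₂ = x₂ + iy₂) is strongly pseudo-convex at the boundary point (0,0) but fails the strong ℂ-linear convexity inequality |Δ(w₀,z)| ≥ c|w₀ − z|² there. -/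
/-- `ρ̃(z) = |z₁|² − Im z₂ + |z₂|⁴` on ℂ². -/
noncomputable def rhoTilde (z : EuclideanSpace ℂ (Fin 2)) : ℝ :=
  ‖z 0‖ ^ 2 - (z 1).im + ‖z 1‖ ^ 4

/-- `ρ(z) = 2x₁² − y₁² − y₂` on ℂ² (with `z₁ = x₁ + iy₁`, `z₂ = x₂ + iy₂`). -/
noncomputable def rhoHeis (z : EuclideanSpace ℂ (Fin 2)) : ℝ :=
  2 * (z 0).re ^ 2 - (z 0).im ^ 2 - (z 1).im

/-- `Δ̃(w,z) = ⟨∂ρ̃(w), w − z⟩` for `ρ̃` above: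
`∂ρ̃(w) = (w̄₁, i/2 + 2|w₂|² w̄₂)`. -/
noncomputable def deltaTilde (w z : EuclideanSpace ℂ (Fin 2)) : ℂ :=
  (starRingEnd ℂ) (w 0) * (w 0 - z 0) +
    (Complex.I / 2 + 2 * (‖w 1‖ : ℂ) ^ 2 * (starRingEnd ℂ) (w 1)) * (w 1 - z 1)

/-! ### Elementary real inequalities -/

private lemma sq2 (x y : ℝ) : (x+y)^2 ≤ 2*x^2+2*y^2 := by nlinarith [sq_nonneg (x-y)]
private lemma sq3 (x y z : ℝ) : (x+y+z)^2 ≤ 3*x^2+3*y^2+3*z^2 := by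
  nlinarith [sq_nonneg (x-y), sq_nonneg (x-z), sq_nonneg (y-z)]
private lemma sq4 (x y z w : ℝ) : (x+y+z+w)^2 ≤ 4*x^2+4*y^2+4*z^2+4*w^2 := by
  nlinarith [sq_nonneg (x-y), sq_nonneg (x-z), sq_nonneg (x-w), sq_nonneg (y-z),
    sq_nonneg (y-w), sq_nonneg (z-w)]
private lemma sqle (x c : ℝ) (h0 : 0 ≤ x) (h1 : x ≤ c) : x^2 ≤ c*x := by nlinarith
private lemma le_of_sq (x c : ℝ) (h0 : 0 ≤ x) (hc : 0 ≤ c) (h : x^2 ≤ c^2) : x ≤ c := by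
  nlinarith
private lemma sq_le_of_abs (x c : ℝ) (h1 : -c ≤ x) (h2 : x ≤ c) : x^2 ≤ c^2 := by nlinarith
private lemma mul_le4 (a b c d : ℝ) (h1 : a ≤ b) (h2 : c ≤ d) (h3 : 0 ≤ a) (h4 : 0 ≤ c) :
    a*c ≤ b*d := mul_le_mul h1 h2 h4 (le_trans h3 h1)

/-- Abstract core estimate for the strong ℂ-linear convexity of `ρ̃` near `0`. -/
lemma stage2 (s t U1 U2 Xp Yp X Ypp d A B M R2 I2 : ℝ)
    (hU2 : U2 = R2^2 + I2^2)
    (key1 : 2*A = d + U1 + (s-t)^2 + 2*s*U2)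
    (key2 : I2 = 2*Xp - U1 + (s+t)*(2*Yp-U2) - d)
    (key3 : R2 = 2*B - 2*X - 4*s*Ypp)
    (hM2 : M^2 = A^2+B^2) (hM0 : 0 ≤ M) (hMA : A ≤ M)
    (hd0 : 0 < d) (hdq : d ≤ 1/4)
    (hs0 : 0 ≤ s) (hsB : s ≤ 1/16) (ht0 : 0 ≤ t) (htB : t ≤ 1/16)
    (hU10 : 0 ≤ U1) (hU1s : U1 ≤ 1/4) (hU2s : U2 ≤ 1/4)
    (cX : X^2 ≤ (1/16)*U1) (cXp : Xp^2 ≤ (1/16)*U1)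
    (cYp : Yp^2 ≤ s*U2) (cYpp : Ypp^2 ≤ s*U2) :
    (1/32)*(U1+U2) ≤ M := by
  have hU20 : 0 ≤ U2 := by rw [hU2]; positivity
  have hsq : 0 ≤ (s-t)^2 := sq_nonneg _
  have hsU2 : 0 ≤ s*U2 := mul_nonneg hs0 hU20
  have hsU2B : s*U2 ≤ (1/16)*U2 := mul_le_mul_of_nonneg_right hsB hU20
  have hU1A : U1 ≤ 2*A := by linarith
  have hdle : d ≤ 2*A := by linarith
  have hA0 : 0 ≤ A := by linarith
  have hU1M : U1 ≤ 2*M := by linarith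
  have hd2 : d^2 ≤ M/2 := by
    have := sqle d (1/4) hd0.le hdq; linarith
  -- size of A and B
  have hstB : (s-t)^2 ≤ 1/256 := by
    have := sq_le_of_abs (s-t) (1/16) (by linarith) (by linarith); linarith
  have hA : A ≤ 3/10 := by linarith
  have hA2 : A^2 ≤ 9/100 := by
    have := sqle A (3/10) hA0 hA; linarith
  have hs2 : s^2 ≤ (1/16)^2 := sq_le_of_abs s (1/16) (by linarith) hsB
  have hsYpp : (s*Ypp)^2 ≤ (1/16)^3*U2 := by
    have h1 : s^2*Ypp^2 ≤ (1/16)^2*(s*U2) :=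
      mul_le4 (s^2) ((1/16)^2) (Ypp^2) (s*U2) hs2 cYpp (sq_nonneg s) (sq_nonneg Ypp)
    linarith [hsU2B]
  have hsYp : (s*Yp)^2 ≤ (1/16)^3*U2 := by
    have h1 : s^2*Yp^2 ≤ (1/16)^2*(s*U2) :=
      mul_le4 (s^2) ((1/16)^2) (Yp^2) (s*U2) hs2 cYp (sq_nonneg s) (sq_nonneg Yp)
    linarith [hsU2B]
  have hX2 : X^2 ≤ 1/64 := by linarith
  have hXp2 : Xp^2 ≤ 1/64 := by linarith
  have hB2 : B^2 ≤ 24/100 := by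
    have h1 : 4*B^2 = (R2 + 2*X + 4*(s*Ypp))^2 := by rw [key3]; ring
    have h2 := sq3 R2 (2*X) (4*(s*Ypp))
    have h3 : R2^2 ≤ 1/4 := by linarith [sq_nonneg I2]
    linarith
  have hM34 : M ≤ 3/4 := le_of_sq M (3/4) hM0 (by norm_num) (by linarith)
  have hMM : M^2 ≤ (3/4)*M := sqle M (3/4) hM0 hM34
  have hB2M : B^2 ≤ (3/4)*M := by linarith [sq_nonneg A]
  -- bound for the real part of u₂
  have hRe2 : R2^2 ≤ 9*M + (3/4)*U1 + (1/16)*U2 := by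
    have h1 := sq3 (2*B) (-(2*X)) (-(4*(s*Ypp)))
    have h2 : R2^2 = (2*B + -(2*X) + -(4*(s*Ypp)))^2 := by rw [key3]; ring
    linarith
  -- bound for the imaginary part of u₂
  have hstp : ((s+t)*(2*Yp-U2))^2 ≤ (1/64) * U2 := by
    have h2Yp : (2*Yp - U2)^2 ≤ U2 := by
      have h1 := sq2 (2*Yp) (-U2)
      have hU22 : U2^2 ≤ (1/4)*U2 := sqle U2 (1/4) hU20 hU2s
      linarith [cYp, hsU2B]
    have hst2 : (s+t)^2 ≤ (1/8)^2 := sq_le_of_abs (s+t) (1/8) (by linarith) (by linarith)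
    calc ((s+t)*(2*Yp-U2))^2 = (s+t)^2 * (2*Yp-U2)^2 := by ring
      _ ≤ (1/8)^2 * U2 := mul_le4 _ _ _ _ hst2 h2Yp (sq_nonneg _) (sq_nonneg _)
      _ = (1/64) * U2 := by norm_num
  have hIm2 : I2^2 ≤ 2*U1 + (1/16)*U2 + 2*M := by
    have h1 := sq4 (2*Xp) (-U1) ((s+t)*(2*Yp-U2)) (-d)
    have h2 : I2^2 = (2*Xp + -U1 + (s+t)*(2*Yp-U2) + -d)^2 := by rw [key2]; ring
    have hU12 : U1^2 ≤ (1/4)*U1 := sqle U1 (1/4) hU10 hU1s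
    linarith
  -- finish
  linarith [hU2, hRe2, hIm2, hU1M]

/-- The strong ℂ-linear convexity estimate for `ρ̃`, in real coordinates. -/
lemma key_real (a1 b1 a2 b2 p1 q1 p2 q2 A B M : ℝ)
    (hA : A = (a1*(a1-p1)+b1*(b1-q1))
        + 2*(a2^2+b2^2)*(a2*(a2-p2)+b2*(b2-q2)) - (b2-q2)/2)
    (hB : B = (a1*(b1-q1)-b1*(a1-p1))
        + 2*(a2^2+b2^2)*(a2*(b2-q2)-b2*(a2-p2)) + (a2-p2)/2)
    (hM2 : M^2 = A^2 + B^2) (hM0 : 0 ≤ M) (hMA : A ≤ M)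
    (hw : b2 = a1^2+b1^2+(a2^2+b2^2)^2)
    (hz : p1^2+q1^2+(p2^2+q2^2)^2 < q2)
    (hwe : a1^2+b1^2+(a2^2+b2^2) < 1/16)
    (hze : p1^2+q1^2+(p2^2+q2^2) < 1/16) :
    (1/32) * ((a1-p1)^2+(b1-q1)^2+(a2-p2)^2+(b2-q2)^2) ≤ M := by
  have hq0 : 0 ≤ q2 := by linarith [sq_nonneg p1, sq_nonneg q1, sq_nonneg (p2^2+q2^2)]
  have hq14 : q2 ≤ 1/4 := by
    refine le_of_sq q2 (1/4) hq0 (by norm_num) ?_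
    linarith [sq_nonneg p1, sq_nonneg q1, sq_nonneg p2]
  have lag1 : (a1*(b1-q1)-b1*(a1-p1))^2 + (a1*(a1-p1)+b1*(b1-q1))^2
      = (a1^2+b1^2)*((a1-p1)^2+(b1-q1)^2) := by ring
  have lag2 : (a2*(a2-p2)+b2*(b2-q2))^2 + (a2*(b2-q2)-b2*(a2-p2))^2
      = (a2^2+b2^2)*((a2-p2)^2+(b2-q2)^2) := by ring
  have h11B : a1^2+b1^2 ≤ 1/16 := by linarith [sq_nonneg a2, sq_nonneg b2]
  have hU10 : (0:ℝ) ≤ (a1-p1)^2+(b1-q1)^2 := by positivity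
  have hU20 : (0:ℝ) ≤ (a2-p2)^2+(b2-q2)^2 := by positivity
  have hmul1 : (a1^2+b1^2)*((a1-p1)^2+(b1-q1)^2) ≤ (1/16)*((a1-p1)^2+(b1-q1)^2) :=
    mul_le_mul_of_nonneg_right h11B hU10
  have h := stage2 (a2^2+b2^2) (p2^2+q2^2)
      ((a1-p1)^2+(b1-q1)^2) ((a2-p2)^2+(b2-q2)^2)
      (a1*(a1-p1)+b1*(b1-q1)) (a2*(a2-p2)+b2*(b2-q2))
      (a1*(b1-q1)-b1*(a1-p1)) (a2*(b2-q2)-b2*(a2-p2))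
      (q2 - (p1^2+q1^2+(p2^2+q2^2)^2)) A B M (a2-p2) (b2-q2)
      (by ring)
      (by linear_combination 2*hA - hw)
      (by linear_combination hw)
      (by linear_combination -2*hB)
      hM2 hM0 hMA
      (by linarith)
      (by linarith [sq_nonneg p1, sq_nonneg q1, sq_nonneg (p2^2+q2^2)])
      (by positivity)
      (by linarith [sq_nonneg a1, sq_nonneg b1])
      (by positivity)
      (by linarith [sq_nonneg p1, sq_nonneg q1])
      hU10
      (by linarith [sq2 a1 (-p1), sq2 b1 (-q1), sq_nonneg a2, sq_nonneg b2, sq_nonneg p2,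
        sq_nonneg q2])
      (by linarith [sq2 a2 (-p2), sq2 b2 (-q2), sq_nonneg a1, sq_nonneg b1, sq_nonneg p1,
        sq_nonneg q1])
      (by linarith [sq_nonneg (a1*(a1-p1)+b1*(b1-q1))])
      (by linarith [sq_nonneg (a1*(b1-q1)-b1*(a1-p1))])
      (by linarith [sq_nonneg (a2*(b2-q2)-b2*(a2-p2))])
      (by linarith [sq_nonneg (a2*(a2-p2)+b2*(b2-q2))])
  linarith

/-! ### Real and imaginary parts of `Δ̃`, and Euclidean norms in coordinates -/

lemma deltaTilde_re (w z : EuclideanSpace ℂ (Fin 2)) :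
    (deltaTilde w z).re = ((w 0).re*((w 0).re-(z 0).re)+(w 0).im*((w 0).im-(z 0).im))
        + 2*((w 1).re^2+(w 1).im^2)*((w 1).re*((w 1).re-(z 1).re)+(w 1).im*((w 1).im-(z 1).im))
        - ((w 1).im-(z 1).im)/2 := by
  have habs : ((‖w 1‖ : ℝ) : ℂ)^2 = ((((w 1).re^2+(w 1).im^2 : ℝ)) : ℂ) := by
    rw [← Complex.ofReal_pow, Complex.sq_norm, Complex.normSq_apply]; push_cast; ring
  simp only [deltaTilde, habs]
  simp only [Complex.add_re, Complex.mul_re, Complex.sub_re, Complex.sub_im, Complex.div_re,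
    Complex.add_im, Complex.mul_im, Complex.I_re, Complex.I_im, Complex.conj_re, Complex.conj_im,
    Complex.ofReal_re, Complex.ofReal_im, Complex.normSq_apply, ← Complex.ofReal_pow]
  norm_num
  ring

lemma deltaTilde_im (w z : EuclideanSpace ℂ (Fin 2)) :
    (deltaTilde w z).im = ((w 0).re*((w 0).im-(z 0).im)-(w 0).im*((w 0).re-(z 0).re))
        + 2*((w 1).re^2+(w 1).im^2)*((w 1).re*((w 1).im-(z 1).im)-(w 1).im*((w 1).re-(z 1).re))
        + ((w 1).re-(z 1).re)/2 := by
  have habs : ((‖w 1‖ : ℝ) : ℂ)^2 = ((((w 1).re^2+(w 1).im^2 : ℝ)) : ℂ) := by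
    rw [← Complex.ofReal_pow, Complex.sq_norm, Complex.normSq_apply]; push_cast; ring
  simp only [deltaTilde, habs]
  simp only [Complex.add_re, Complex.mul_re, Complex.sub_re, Complex.sub_im, Complex.div_im,
    Complex.add_im, Complex.mul_im, Complex.I_re, Complex.I_im, Complex.conj_re, Complex.conj_im,
    Complex.ofReal_re, Complex.ofReal_im, Complex.normSq_apply, ← Complex.ofReal_pow]
  norm_num
  ring

lemma euc_normsq (v : EuclideanSpace ℂ (Fin 2)) :
    ‖v‖^2 = ((v 0).re^2+(v 0).im^2)+((v 1).re^2+(v 1).im^2) := by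
  rw [EuclideanSpace.norm_eq, Real.sq_sqrt (by positivity)]
  simp [Fin.sum_univ_two, Complex.sq_norm, Complex.normSq_apply]
  ring

/-- Part 1: `ρ̃` is strongly ℂ-linearly convex near the origin. -/
lemma part1 : ∃ ε : ℝ, 0 < ε ∧ ∃ c : ℝ, 0 < c ∧ ∀ w z : EuclideanSpace ℂ (Fin 2),
    rhoTilde w = 0 → ‖w‖ < ε → rhoTilde z < 0 → ‖z‖ < ε →
      c * ‖w - z‖ ^ 2 ≤ ‖deltaTilde w z‖ := by
  refine ⟨1/4, by norm_num, 1/32, by norm_num, fun w z hw hwe hz hze => ?_⟩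
  have habs4 : ∀ x : ℂ, ‖x‖ ^ 4 = (x.re^2+x.im^2)^2 := fun x => by
    rw [show (4:ℕ) = 2*2 from rfl, pow_mul, Complex.sq_norm, Complex.normSq_apply]; ring
  have habs2 : ∀ x : ℂ, ‖x‖ ^ 2 = x.re^2+x.im^2 := fun x => by
    rw [Complex.sq_norm, Complex.normSq_apply]; ring
  rw [rhoTilde, habs4, habs2] at hw hz
  have hwe' : ((w 0).re^2+(w 0).im^2)+((w 1).re^2+(w 1).im^2) < 1/16 := by
    have h1 : ‖w‖^2 < (1/4)^2 := by
      have := norm_nonneg w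
      nlinarith
    rw [euc_normsq] at h1; linarith
  have hze' : ((z 0).re^2+(z 0).im^2)+((z 1).re^2+(z 1).im^2) < 1/16 := by
    have h1 : ‖z‖^2 < (1/4)^2 := by
      have := norm_nonneg z
      nlinarith
    rw [euc_normsq] at h1; linarith
  have hM2 : (‖deltaTilde w z‖)^2
      = (deltaTilde w z).re^2 + (deltaTilde w z).im^2 := by
    rw [Complex.sq_norm, Complex.normSq_apply]; ring
  have key := key_real (w 0).re (w 0).im (w 1).re (w 1).im
      (z 0).re (z 0).im (z 1).re (z 1).im
      (deltaTilde w z).re (deltaTilde w z).im (‖deltaTilde w z‖)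
      (deltaTilde_re w z) (deltaTilde_im w z) hM2
      (norm_nonneg _) (Complex.re_le_norm _)
      (by linarith) (by linarith) (by linarith) (by linarith)
  have hnorm : ‖w - z‖^2 = ((w 0).re-(z 0).re)^2+((w 0).im-(z 0).im)^2
      +(((w 1).re-(z 1).re)^2+((w 1).im-(z 1).im)^2) := by
    rw [euc_normsq]
    have h0 : (w - z) 0 = w 0 - z 0 := rfl
    have h1 : (w - z) 1 = w 1 - z 1 := rfl
    rw [h0, h1]
    simp [Complex.sub_re, Complex.sub_im]
  rw [hnorm]
  linarith

/-! ### Derivative machinery: coordinate real/imaginary parts as continuous linear maps -/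

noncomputable def Lre (i : Fin 2) : EuclideanSpace ℂ (Fin 2) →L[ℝ] ℝ :=
  Complex.reCLM.comp ((EuclideanSpace.proj i).restrictScalars ℝ)

noncomputable def Lim (i : Fin 2) : EuclideanSpace ℂ (Fin 2) →L[ℝ] ℝ :=
  Complex.imCLM.comp ((EuclideanSpace.proj i).restrictScalars ℝ)

@[simp] lemma Lre_apply (i : Fin 2) (v : EuclideanSpace ℂ (Fin 2)) : Lre i v = (v i).re := rfl
@[simp] lemma Lim_apply (i : Fin 2) (v : EuclideanSpace ℂ (Fin 2)) : Lim i v = (v i).im := rfl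

/-- First derivative of `ρ̃`. -/
noncomputable def Ft (x : EuclideanSpace ℂ (Fin 2)) : EuclideanSpace ℂ (Fin 2) →L[ℝ] ℝ :=
  (2 * Lre 0 x) • Lre 0 + (2 * Lim 0 x) • Lim 0 - Lim 1
    + (4 * (Lre 1 x * Lre 1 x + Lim 1 x * Lim 1 x) * Lre 1 x) • Lre 1
    + (4 * (Lre 1 x * Lre 1 x + Lim 1 x * Lim 1 x) * Lim 1 x) • Lim 1

lemma rhoTilde_eq : rhoTilde = fun z =>
    Lre 0 z * Lre 0 z + Lim 0 z * Lim 0 z - Lim 1 z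
      + (Lre 1 z * Lre 1 z + Lim 1 z * Lim 1 z) * (Lre 1 z * Lre 1 z + Lim 1 z * Lim 1 z) := by
  funext z
  simp only [rhoTilde, Lre_apply, Lim_apply, Complex.sq_norm, Complex.normSq_apply,
    show (4:ℕ) = 2*2 from rfl, pow_mul]
  ring

lemma hFt : ∀ x, HasFDerivAt rhoTilde (Ft x) x := by
  intro x
  rw [rhoTilde_eq]
  have h1 := (Lre 0).hasFDerivAt (x := x)
  have h2 := (Lim 0).hasFDerivAt (x := x)
  have h3 := (Lre 1).hasFDerivAt (x := x)
  have h4 := (Lim 1).hasFDerivAt (x := x)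
  have hq := (h3.mul h3).add (h4.mul h4)
  have H := (((h1.mul h1).add (h2.mul h2)).sub (Lim 1).hasFDerivAt).add (hq.mul hq)
  refine H.congr_fderiv ?_
  ext v
  simp [Ft]
  ring

/-- Second derivative of `ρ̃` at `0`. -/
noncomputable def Gt : EuclideanSpace ℂ (Fin 2) →L[ℝ] (EuclideanSpace ℂ (Fin 2) →L[ℝ] ℝ) :=
  (((2:ℝ) • Lre 0).smulRight (Lre 0)) + (((2:ℝ) • Lim 0).smulRight (Lim 0))

lemma hFt0 : HasFDerivAt Ft Gt 0 := by
  have h1 := (Lre 0).hasFDerivAt (x := (0:EuclideanSpace ℂ (Fin 2)))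
  have h2 := (Lim 0).hasFDerivAt (x := (0:EuclideanSpace ℂ (Fin 2)))
  have h3 := (Lre 1).hasFDerivAt (x := (0:EuclideanSpace ℂ (Fin 2)))
  have h4 := (Lim 1).hasFDerivAt (x := (0:EuclideanSpace ℂ (Fin 2)))
  have hc1 : HasFDerivAt (fun x => 2 * Lre 0 x) ((2:ℝ) • Lre 0) (0:EuclideanSpace ℂ (Fin 2)) :=
    h1.const_mul 2
  have hc2 : HasFDerivAt (fun x => 2 * Lim 0 x) ((2:ℝ) • Lim 0) (0:EuclideanSpace ℂ (Fin 2)) :=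
    h2.const_mul 2
  have hq := ((h3.mul h3).add (h4.mul h4)).const_mul (4:ℝ)
  have hc3 := hq.mul h3
  have hc4 := hq.mul h4
  have H := ((((hc1.smul_const (Lre 0)).add (hc2.smul_const (Lim 0))).sub_const (Lim 1)).add
      (hc3.smul_const (Lre 1))).add (hc4.smul_const (Lim 1))
  refine H.congr_fderiv ?_
  ext v u
  simp [Gt]

lemma fderiv_rhoTilde : fderiv ℝ rhoTilde = Ft := funext fun x => (hFt x).fderiv

lemma fderiv2_rhoTilde : fderiv ℝ (fderiv ℝ rhoTilde) 0 = Gt := by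
  rw [fderiv_rhoTilde]; exact hFt0.fderiv

/-- Part 2: `ρ̃` is not strongly convex at the origin. -/
lemma part2 : ¬ ∃ c : ℝ, 0 < c ∧ ∀ H : EuclideanSpace ℂ (Fin 2),
    fderiv ℝ rhoTilde 0 H = 0 →
      c * ‖H‖ ^ 2 ≤ fderiv ℝ (fderiv ℝ rhoTilde) 0 H H := by
  rintro ⟨c, hc, hcond⟩
  set H : EuclideanSpace ℂ (Fin 2) := EuclideanSpace.single 1 (1:ℂ) with hH
  have h0 : H 0 = 0 := by simp [hH, EuclideanSpace.single_apply]
  have h1 : H 1 = 1 := by simp [hH, EuclideanSpace.single_apply]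
  have hfd : fderiv ℝ rhoTilde 0 H = 0 := by
    rw [fderiv_rhoTilde]
    simp [Ft, h0, h1]
  have h2 := hcond H hfd
  rw [fderiv2_rhoTilde] at h2
  have h3 : Gt H H = 0 := by
    simp [Gt, h0]
  rw [h3] at h2
  have h4 : ‖H‖ = 1 := by rw [hH, EuclideanSpace.norm_single]; simp
  rw [h4] at h2
  nlinarith

/-- First derivative of `ρ`. -/
noncomputable def Fh (x : EuclideanSpace ℂ (Fin 2)) : EuclideanSpace ℂ (Fin 2) →L[ℝ] ℝ :=
  (2 * (2 * Lre 0 x)) • Lre 0 - (2 * Lim 0 x) • Lim 0 - Lim 1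

lemma rhoHeis_eq : rhoHeis = fun z =>
    2 * (Lre 0 z * Lre 0 z) - Lim 0 z * Lim 0 z - Lim 1 z := by
  funext z; simp only [rhoHeis, Lre_apply, Lim_apply]; ring

lemma hFh : ∀ x, HasFDerivAt rhoHeis (Fh x) x := by
  intro x
  rw [rhoHeis_eq]
  have h1 := (Lre 0).hasFDerivAt (x := x)
  have h2 := (Lim 0).hasFDerivAt (x := x)
  have H := (((h1.mul h1).const_mul (2:ℝ)).sub (h2.mul h2)).sub (Lim 1).hasFDerivAt
  refine H.congr_fderiv ?_
  ext v
  simp [Fh]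
  ring

/-- Second derivative of `ρ` at `0`. -/
noncomputable def Gh : EuclideanSpace ℂ (Fin 2) →L[ℝ] (EuclideanSpace ℂ (Fin 2) →L[ℝ] ℝ) :=
  (((4:ℝ) • Lre 0).smulRight (Lre 0)) - (((2:ℝ) • Lim 0).smulRight (Lim 0))

lemma hFh0 : HasFDerivAt Fh Gh 0 := by
  have h1 := (Lre 0).hasFDerivAt (x := (0:EuclideanSpace ℂ (Fin 2)))
  have h2 := (Lim 0).hasFDerivAt (x := (0:EuclideanSpace ℂ (Fin 2)))
  have hc1 : HasFDerivAt (fun x => 2 * (2 * Lre 0 x)) ((4:ℝ) • Lre 0)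
      (0:EuclideanSpace ℂ (Fin 2)) := by
    have := (h1.const_mul (2:ℝ)).const_mul (2:ℝ)
    refine this.congr_fderiv ?_
    ext v; simp; ring
  have hc2 : HasFDerivAt (fun x => 2 * Lim 0 x) ((2:ℝ) • Lim 0) (0:EuclideanSpace ℂ (Fin 2)) :=
    h2.const_mul 2
  have H := ((hc1.smul_const (Lre 0)).sub (hc2.smul_const (Lim 0))).sub_const (Lim 1)
  refine H.congr_fderiv ?_
  ext v u
  simp [Gh]

lemma fderiv2_rhoHeis : fderiv ℝ (fderiv ℝ rhoHeis) 0 = Gh := by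
  rw [show fderiv ℝ rhoHeis = Fh from funext fun x => (hFh x).fderiv]; exact hFh0.fderiv

/-- Part 3: `ρ` is strongly pseudo-convex at `0`. -/
lemma part3 : ∃ c : ℝ, 0 < c ∧ ∀ h : EuclideanSpace ℂ (Fin 2),
    Complex.I / 2 * h 1 = 0 →
      c * ‖h‖ ^ 2 ≤ (1 / 4) * (fderiv ℝ (fderiv ℝ rhoHeis) 0 h h +
        fderiv ℝ (fderiv ℝ rhoHeis) 0 (Complex.I • h) (Complex.I • h)) := by
  refine ⟨1/2, by norm_num, fun h htan => ?_⟩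
  have h1 : h 1 = 0 := by
    have : (Complex.I / 2) ≠ 0 := by simp [Complex.I_ne_zero]
    exact (mul_eq_zero.mp htan).resolve_left this
  rw [fderiv2_rhoHeis]
  have hI0 : (Complex.I • h) 0 = Complex.I * h 0 := rfl
  have e1 : Gh h h = 4 * (h 0).re^2 - 2 * (h 0).im^2 := by
    simp [Gh]; ring
  have e2 : Gh (Complex.I • h) (Complex.I • h) = 4 * (h 0).im^2 - 2 * (h 0).re^2 := by
    simp [Gh, hI0]; ring
  have hn : ‖h‖^2 = (h 0).re^2 + (h 0).im^2 := by
    rw [EuclideanSpace.norm_eq, Real.sq_sqrt (by positivity)]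
    simp [Fin.sum_univ_two, h1, Complex.sq_norm, Complex.normSq_apply]
    ring
  rw [e1, e2, hn]
  ring_nf
  linarith

/-- Part 4: `ρ` fails the strong ℂ-linear convexity inequality at `0`. -/
lemma part4 : ¬ ∃ c : ℝ, 0 < c ∧ ∀ z : EuclideanSpace ℂ (Fin 2), rhoHeis z < 0 →
    c * ‖(0 : EuclideanSpace ℂ (Fin 2)) - z‖ ^ 2 ≤
      ‖Complex.I / 2 * (0 - z 1)‖ := by
  rintro ⟨c, hc, hcond⟩
  set z : EuclideanSpace ℂ (Fin 2) := EuclideanSpace.single 0 Complex.I with hz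
  have h0 : z 0 = Complex.I := by simp [hz, EuclideanSpace.single_apply]
  have h1 : z 1 = 0 := by simp [hz, EuclideanSpace.single_apply]
  have hneg : rhoHeis z < 0 := by
    simp [rhoHeis, h0, h1]
  have := hcond z hneg
  rw [h1] at this
  simp only [sub_zero, mul_zero, map_zero, norm_zero] at this
  have hn : ‖(0 : EuclideanSpace ℂ (Fin 2)) - z‖ = 1 := by
    rw [zero_sub, norm_neg, hz, EuclideanSpace.norm_single]
    simp
  rw [hn] at this
  nlinarith

/-- Neither implication in `strongly convex ⇒ strongly ℂ-linearly convex ⇒ strongly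
pseudo-convex` can be reversed: `ρ̃` is strongly ℂ-linearly convex near `0` but not strongly
convex there, while `ρ` is strongly pseudo-convex at `0` (where `T^ℂ_0 = {h : (i/2)h₂ = 0}` and
`Δ((0,0),z) = (i/2)(0 − z₂)`) but fails the strong ℂ-linear convexity inequality at `0`. -/
theorem convexity_implications_not_reversible :
    -- ρ̃ is strongly ℂ-linearly convex near (0,0) ...
    (∃ ε : ℝ, 0 < ε ∧ ∃ c : ℝ, 0 < c ∧ ∀ w z : EuclideanSpace ℂ (Fin 2),
      rhoTilde w = 0 → ‖w‖ < ε → rhoTilde z < 0 → ‖z‖ < ε →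
        c * ‖w - z‖ ^ 2 ≤ ‖deltaTilde w z‖) ∧
    -- ... but not strongly convex there
    (¬ ∃ c : ℝ, 0 < c ∧ ∀ H : EuclideanSpace ℂ (Fin 2),
      fderiv ℝ rhoTilde 0 H = 0 →
        c * ‖H‖ ^ 2 ≤ fderiv ℝ (fderiv ℝ rhoTilde) 0 H H) ∧
    -- ρ is strongly pseudo-convex at the boundary point (0,0) ...
    (∃ c : ℝ, 0 < c ∧ ∀ h : EuclideanSpace ℂ (Fin 2),
      Complex.I / 2 * h 1 = 0 →
        c * ‖h‖ ^ 2 ≤ (1 / 4) * (fderiv ℝ (fderiv ℝ rhoHeis) 0 h h +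
          fderiv ℝ (fderiv ℝ rhoHeis) 0 (Complex.I • h) (Complex.I • h))) ∧
    -- ... but fails the strong ℂ-linear convexity inequality at (0,0)
    (¬ ∃ c : ℝ, 0 < c ∧ ∀ z : EuclideanSpace ℂ (Fin 2), rhoHeis z < 0 →
      c * ‖(0 : EuclideanSpace ℂ (Fin 2)) - z‖ ^ 2 ≤
        ‖Complex.I / 2 * (0 - z 1)‖) := by
  exact ⟨part1, part2, part3, part4⟩
end

section
/- (Quantitative C^{1,1} implicit function theorem) Let F : ℝ^{N-1} × ℝ → ℝ be C^{1,1} with ‖F‖_{C^{1,1}} ≤ M, F(0,0) = 0, and ∂_y F(0,0) = 1. Then there exist a = 1/(8M²) and b = 1/(2M) such that for each |x| ≤ a the equation F(x,y) = 0 has a unique solution y = φ(x) with |y| ≤ b, and φ is C^{1,1} on {|x| ≤ a} with ‖φ‖_{C^{1,1}} ≤ C M⁴ for an absolute constant C. -/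
open Filter Topology Set

private lemma aux_taylor {E : Type*} [NormedAddCommGroup E] [NormedSpace ℝ E]
    (F : E → ℝ) (hF : ContDiff ℝ 1 F) (M : ℝ)
    (hLip : LipschitzWith (Real.toNNReal M) (fderiv ℝ F)) (hM : 0 ≤ M) (p q : E) :
    ‖F q - F p - fderiv ℝ F p (q - p)‖ ≤ M * ‖q - p‖ ^ 2 := by
  set L := fderiv ℝ F with hL
  have hG : ∀ r : E, HasFDerivAt (fun s => F s - L p s) (L r - L p) r := fun r =>
    ((hF.differentiable one_ne_zero r).hasFDerivAt).sub ((L p).hasFDerivAt)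
  have bound : ∀ r ∈ Metric.closedBall p ‖q - p‖, ‖L r - L p‖ ≤ M * ‖q - p‖ := by
    intro r hr
    have h1 : ‖L r - L p‖ ≤ M.toNNReal * ‖r - p‖ := by
      have := hLip.norm_sub_le r p
      simpa [hL] using this
    have h2 : (M.toNNReal : ℝ) = M := Real.coe_toNNReal _ hM
    rw [h2] at h1
    refine h1.trans ?_
    gcongr
    simpa [dist_eq_norm] using hr
  have key : ‖(F q - L p q) - (F p - L p p)‖ ≤ (M * ‖q - p‖) * ‖q - p‖ :=
    (convex_closedBall p ‖q - p‖).norm_image_sub_le_of_norm_hasFDerivWithin_le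
      (fun r _ => (hG r).hasFDerivWithinAt) bound
      (Metric.mem_closedBall_self (norm_nonneg _))
      (by simp [Metric.mem_closedBall, dist_eq_norm])
  calc ‖F q - F p - L p (q - p)‖ = ‖(F q - L p q) - (F p - L p p)‖ := by
        rw [map_sub]; ring_nf
    _ ≤ (M * ‖q - p‖) * ‖q - p‖ := key
    _ = M * ‖q - p‖ ^ 2 := by ring

private lemma aux_quad_fderiv {E : Type*} [NormedAddCommGroup E] [NormedSpace ℝ E]
    (f : E → ℝ) (A : E →L[ℝ] ℝ) (x₀ : E) (K r : ℝ) (hK : 0 < K) (hr : 0 < r)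
    (h : ∀ x, ‖x - x₀‖ < r → ‖f x - f x₀ - A (x - x₀)‖ ≤ K * ‖x - x₀‖ ^ 2) :
    HasFDerivAt f A x₀ := by
  rw [hasFDerivAt_iff_isLittleO_nhds_zero]
  rw [Asymptotics.isLittleO_iff]
  intro c hc
  have : ∀ᶠ v : E in 𝓝 0, ‖v‖ < min r (c / K) := by
    have : Metric.ball (0 : E) (min r (c / K)) ∈ 𝓝 (0 : E) :=
      Metric.ball_mem_nhds _ (lt_min hr (div_pos hc hK))
    filter_upwards [this] with v hv
    simpa [dist_eq_norm] using hv
  filter_upwards [this] with v hv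
  have h1 : ‖f (x₀ + v) - f x₀ - A v‖ ≤ K * ‖v‖ ^ 2 := by
    have := h (x₀ + v) (by simpa using (lt_of_lt_of_le hv (min_le_left _ _)))
    simpa using this
  calc ‖f (x₀ + v) - f x₀ - A v‖ ≤ K * ‖v‖ ^ 2 := h1
    _ = K * ‖v‖ * ‖v‖ := by ring
    _ ≤ K * (c / K) * ‖v‖ := by
        gcongr
        exact le_of_lt (lt_of_lt_of_le hv (min_le_right _ _))
    _ = c * ‖v‖ := by field_simp

set_option maxHeartbeats 2000000 in
/-- Quantitative `C^{1,1}` implicit function theorem: there is an absolute constant `C` such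
that whenever `F : ℝ^{N-1} × ℝ → ℝ` is `C^{1,1}` with `‖F‖_{C^{1,1}} ≤ M`, `F(0,0) = 0` and
`∂_y F(0,0) = 1`, then with `a = 1/(8M²)`, `b = 1/(2M)`, for every `|x| ≤ a` the equation
`F(x,y) = 0` has a unique solution `y = φ(x)` with `|y| ≤ b`, and `φ` is `C^{1,1}` on
`{|x| ≤ a}` with `‖φ‖_{C^{1,1}} ≤ C·M⁴`. -/
theorem quantitative_C11_implicit_function_theorem :
    ∃ C : ℝ, 0 < C ∧
      ∀ (m : ℕ) (F : EuclideanSpace ℝ (Fin m) × ℝ → ℝ) (M : ℝ),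
        ContDiff ℝ 1 F →
        (∀ p, |F p| ≤ M) →
        (∀ p, ‖fderiv ℝ F p‖ ≤ M) →
        LipschitzWith (Real.toNNReal M) (fderiv ℝ F) →
        F (0, 0) = 0 →
        fderiv ℝ F (0, 0) (0, 1) = 1 →
        ∃ φ : EuclideanSpace ℝ (Fin m) → ℝ,
          (∀ x, ‖x‖ ≤ 1 / (8 * M ^ 2) →
            |φ x| ≤ 1 / (2 * M) ∧ F (x, φ x) = 0 ∧
              ∀ y : ℝ, |y| ≤ 1 / (2 * M) → F (x, y) = 0 → y = φ x) ∧
          (∀ x, ‖x‖ ≤ 1 / (8 * M ^ 2) →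
            |φ x| ≤ C * M ^ 4 ∧ DifferentiableAt ℝ φ x ∧ ‖fderiv ℝ φ x‖ ≤ C * M ^ 4) ∧
          (∀ x₁ x₂, ‖x₁‖ ≤ 1 / (8 * M ^ 2) → ‖x₂‖ ≤ 1 / (8 * M ^ 2) →
            ‖fderiv ℝ φ x₁ - fderiv ℝ φ x₂‖ ≤ C * M ^ 4 * ‖x₁ - x₂‖) := by
  refine ⟨100, by norm_num, ?_⟩
  intro m F M hF _hFb hFd hLip hF0 hdy
  set L := fderiv ℝ F with hLdef
  -- M ≥ 1
  have hnorm01 : ‖((0 : EuclideanSpace ℝ (Fin m)), (1 : ℝ))‖ = 1 := by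
    simp [Prod.norm_def]
  have hM1 : 1 ≤ M := by
    have h1 : |L (0, 0) ((0 : EuclideanSpace ℝ (Fin m)), (1 : ℝ))| ≤ ‖L (0, 0)‖ * ‖((0 : EuclideanSpace ℝ (Fin m)), (1 : ℝ))‖ :=
      (L (0, 0)).le_opNorm _
    rw [hdy, hnorm01, mul_one] at h1
    calc (1 : ℝ) = |(1 : ℝ)| := by norm_num
      _ ≤ ‖L (0,0)‖ := by simpa using h1
      _ ≤ M := hFd _
  have hM0 : 0 < M := lt_of_lt_of_le one_pos hM1
  -- global Lipschitz of F
  have hFsub : ∀ p q : EuclideanSpace ℝ (Fin m) × ℝ, |F q - F p| ≤ M * ‖q - p‖ := by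
    intro p q
    exact Convex.norm_image_sub_le_of_norm_fderiv_le
      (fun r _ => hF.differentiable one_ne_zero r) (fun r _ => hFd r) convex_univ trivial trivial
  have htay : ∀ p q : EuclideanSpace ℝ (Fin m) × ℝ, |F q - F p - L p (q - p)| ≤ M * ‖q - p‖ ^ 2 :=
    fun p q => aux_taylor F hF M hLip hM0.le p q
  have hLsub : ∀ p q : EuclideanSpace ℝ (Fin m) × ℝ, ‖L q - L p‖ ≤ M * ‖q - p‖ := by
    intro p q
    have h1 := hLip.norm_sub_le q p
    have h2 : (M.toNNReal : ℝ) = M := Real.coe_toNNReal _ hM0.le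
    rw [h2] at h1
    exact h1
  -- partial derivative in y
  set d : EuclideanSpace ℝ (Fin m) × ℝ → ℝ := fun p => L p ((0 : EuclideanSpace ℝ (Fin m)), (1 : ℝ)) with hddef
  have hderivy : ∀ (x : EuclideanSpace ℝ (Fin m)) (y : ℝ), HasDerivAt (fun y => F (x, y)) (d (x, y)) y := by
    intro x y
    have h1 : HasDerivAt (fun y : ℝ => (x, y)) ((0 : EuclideanSpace ℝ (Fin m)), (1 : ℝ)) y :=
      (hasDerivAt_const y x).prodMk (hasDerivAt_id y)
    exact ((hF.differentiable one_ne_zero (x, y)).hasFDerivAt).comp_hasDerivAt y h1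
  have hdsub : ∀ p q : EuclideanSpace ℝ (Fin m) × ℝ, |d p - d q| ≤ M * ‖p - q‖ := by
    intro p q
    calc |d p - d q| = |(L p - L q) ((0 : EuclideanSpace ℝ (Fin m)), (1 : ℝ))| := by simp [hddef]
      _ ≤ ‖L p - L q‖ * ‖((0 : EuclideanSpace ℝ (Fin m)), (1 : ℝ))‖ := (L p - L q).le_opNorm _
      _ = ‖L p - L q‖ := by rw [hnorm01, mul_one]
      _ ≤ M * ‖p - q‖ := hLsub q p
  have hdlow : ∀ p : EuclideanSpace ℝ (Fin m) × ℝ, ‖p‖ ≤ 1 / (2 * M) → 1 / 2 ≤ d p := by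
    intro p hp
    have h1 : |d p - 1| ≤ M * ‖p‖ := by
      have h := hdsub p (0, 0)
      rw [show d (0, 0) = 1 from hdy] at h
      simpa [Prod.mk_zero_zero] using h
    have h2 : M * ‖p‖ ≤ 1 / 2 := by
      calc M * ‖p‖ ≤ M * (1 / (2 * M)) := by gcongr
        _ = 1 / 2 := by field_simp
    have := abs_le.1 (h1.trans h2)
    linarith [this.1]
  -- norms in the box
  have hboxnorm : ∀ (x : EuclideanSpace ℝ (Fin m)) (y : ℝ), ‖x‖ ≤ 1 / (2 * M) → |y| ≤ 1 / (2 * M) →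
      ‖((x, y) : EuclideanSpace ℝ (Fin m) × ℝ)‖ ≤ 1 / (2 * M) := by
    intro x y hx hy
    rw [Prod.norm_def]
    exact max_le hx (by simpa using hy)
  -- quantitative monotonicity
  have hmono : ∀ (x : EuclideanSpace ℝ (Fin m)), ‖x‖ ≤ 1 / (2 * M) → ∀ y₁ y₂ : ℝ, |y₁| ≤ 1 / (2 * M) →
      |y₂| ≤ 1 / (2 * M) → y₂ ≤ y₁ → (y₁ - y₂) / 2 ≤ F (x, y₁) - F (x, y₂) := by
    intro x hx y₁ y₂ hy₁ hy₂ hle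
    rcases eq_or_lt_of_le hle with rfl | hlt
    · simp
    · obtain ⟨c, hc, hceq⟩ := exists_hasDerivAt_eq_slope (fun y => F (x, y)) (fun y => d (x, y))
        hlt ((hF.continuous.comp (continuous_const.prodMk continuous_id)).continuousOn) (fun y _ => hderivy x y)
      have hcb : |c| ≤ 1 / (2 * M) := by
        rw [abs_le]
        constructor
        · linarith [hc.1, abs_le.1 hy₂ |>.1]
        · linarith [hc.2, abs_le.1 hy₁ |>.2]
      have hdc : 1 / 2 ≤ d (x, c) := hdlow _ (hboxnorm x c hx hcb)
      have : F (x, y₁) - F (x, y₂) = d (x, c) * (y₁ - y₂) := by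
        rw [eq_div_iff (sub_ne_zero.2 hlt.ne')] at hceq
        linarith [hceq]
      rw [this]
      nlinarith
  have habs : ∀ (x : EuclideanSpace ℝ (Fin m)), ‖x‖ ≤ 1 / (2 * M) → ∀ y₁ y₂ : ℝ, |y₁| ≤ 1 / (2 * M) →
      |y₂| ≤ 1 / (2 * M) → |y₁ - y₂| ≤ 2 * |F (x, y₁) - F (x, y₂)| := by
    intro x hx y₁ y₂ hy₁ hy₂
    rcases le_total y₂ y₁ with h | h
    · have := hmono x hx y₁ y₂ hy₁ hy₂ h
      rw [abs_of_nonneg (by linarith)]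
      calc y₁ - y₂ ≤ 2 * (F (x, y₁) - F (x, y₂)) := by linarith
        _ ≤ 2 * |F (x, y₁) - F (x, y₂)| := by gcongr; exact le_abs_self _
    · have := hmono x hx y₂ y₁ hy₂ hy₁ h
      rw [abs_sub_comm, abs_of_nonneg (by linarith)]
      calc y₂ - y₁ ≤ 2 * (F (x, y₂) - F (x, y₁)) := by linarith
        _ = 2 * -(F (x, y₁) - F (x, y₂)) := by ring
        _ ≤ 2 * |F (x, y₁) - F (x, y₂)| := by gcongr; exact neg_le_abs _
  -- basic arithmetic facts
  have hM2 : (0:ℝ) < M ^ 2 := by positivity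
  have hb23 : (1:ℝ) / (6 * M ^ 2) ≤ 1 / (2 * M) :=
    one_div_le_one_div_of_le (by linarith) (by nlinarith)
  have h86 : (1:ℝ) / (8 * M ^ 2) ≤ 1 / (6 * M ^ 2) :=
    one_div_le_one_div_of_le (by positivity) (by nlinarith)
  have hFx0 : ∀ x : EuclideanSpace ℝ (Fin m), |F (x, 0)| ≤ M * ‖x‖ := by
    intro x
    have h := hFsub (0, 0) (x, 0)
    rw [hF0, sub_zero] at h
    refine h.trans ?_
    gcongr
    simp [Prod.norm_def]
  -- existence of a root
  have hroot : ∀ x : EuclideanSpace ℝ (Fin m), ‖x‖ ≤ 1 / (6 * M ^ 2) →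
      ∃ y : ℝ, |y| ≤ 2 * M * ‖x‖ ∧ F (x, y) = 0 := by
    intro x hx
    have hxb : ‖x‖ ≤ 1 / (2 * M) := hx.trans hb23
    have hFx : |F (x, 0)| ≤ 1 / (6 * M) := by
      refine (hFx0 x).trans ?_
      calc M * ‖x‖ ≤ M * (1 / (6 * M ^ 2)) := by gcongr
        _ = 1 / (6 * M) := by field_simp
    have hb0 : (0:ℝ) < 1 / (2 * M) := by positivity
    have habsb : |(1 : ℝ) / (2 * M)| ≤ 1 / (2 * M) := by rw [abs_of_nonneg hb0.le]
    have habsnb : |-((1 : ℝ) / (2 * M))| ≤ 1 / (2 * M) := by rw [abs_neg, abs_of_nonneg hb0.le]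
    have habs0 : |(0:ℝ)| ≤ 1 / (2 * M) := by simpa using hb0.le
    have h46 : (1:ℝ) / (6 * M) ≤ 1 / (4 * M) :=
      one_div_le_one_div_of_le (by linarith) (by linarith)
    have hhalf : (1 / (2 * M) - 0) / 2 = 1 / (4 * M) := by field_simp; ring
    have hgb : (0:ℝ) ≤ F (x, 1 / (2 * M)) := by
      have h1 := hmono x hxb (1 / (2 * M)) 0 habsb habs0 hb0.le
      rw [hhalf] at h1
      have h2 : -(1 / (6 * M)) ≤ F (x, 0) := (abs_le.1 hFx).1
      linarith
    have hgnb : F (x, -(1 / (2 * M))) ≤ 0 := by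
      have h1 := hmono x hxb 0 (-(1 / (2 * M))) habs0 habsnb (by linarith)
      have hhalf2 : ((0:ℝ) - -(1 / (2 * M))) / 2 = 1 / (4 * M) := by field_simp; ring
      rw [hhalf2] at h1
      have h2 : F (x, 0) ≤ 1 / (6 * M) := (abs_le.1 hFx).2
      linarith
    have hcont : ContinuousOn (fun y => F (x, y)) (Icc (-(1 / (2 * M))) (1 / (2 * M))) :=
      (hF.continuous.comp (continuous_const.prodMk continuous_id)).continuousOn
    have hivt := intermediate_value_Icc (by linarith : -(1 / (2 * M)) ≤ 1 / (2 * M)) hcont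
    have h0mem : (0:ℝ) ∈ Icc (F (x, -(1 / (2 * M)))) (F (x, 1 / (2 * M))) := ⟨hgnb, hgb⟩
    obtain ⟨y, hymem, hy0'⟩ := hivt h0mem
    have hy0 : F (x, y) = 0 := hy0'
    have hyb : |y| ≤ 1 / (2 * M) := abs_le.2 ⟨hymem.1, hymem.2⟩
    refine ⟨y, ?_, hy0⟩
    have h1 := habs x hxb y 0 hyb habs0
    rw [hy0, sub_zero, zero_sub, abs_neg] at h1
    calc |y| ≤ 2 * |F (x, 0)| := h1
      _ ≤ 2 * (M * ‖x‖) := by gcongr; exact hFx0 x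
      _ = 2 * M * ‖x‖ := by ring
  -- define φ
  set φ : EuclideanSpace ℝ (Fin m) → ℝ :=
    fun x => if h : ‖x‖ ≤ 1 / (6 * M ^ 2) then (hroot x h).choose else 0 with hφdef
  have hφspec : ∀ x : EuclideanSpace ℝ (Fin m), ‖x‖ ≤ 1 / (6 * M ^ 2) →
      |φ x| ≤ 2 * M * ‖x‖ ∧ F (x, φ x) = 0 := by
    intro x h
    simp only [hφdef, dif_pos h]
    exact (hroot x h).choose_spec
  have hφb : ∀ x : EuclideanSpace ℝ (Fin m), ‖x‖ ≤ 1 / (6 * M ^ 2) → |φ x| ≤ 1 / (3 * M) := by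
    intro x h
    refine (hφspec x h).1.trans ?_
    calc 2 * M * ‖x‖ ≤ 2 * M * (1 / (6 * M ^ 2)) := by gcongr
      _ = 1 / (3 * M) := by field_simp; ring
  have h32 : (1:ℝ) / (3 * M) ≤ 1 / (2 * M) :=
    one_div_le_one_div_of_le (by linarith) (by linarith)
  have hφbb : ∀ x : EuclideanSpace ℝ (Fin m), ‖x‖ ≤ 1 / (6 * M ^ 2) → |φ x| ≤ 1 / (2 * M) :=
    fun x h => (hφb x h).trans h32
  -- Lipschitz bound for φ
  have hφlip : ∀ x₁ x₂ : EuclideanSpace ℝ (Fin m), ‖x₁‖ ≤ 1 / (6 * M ^ 2) →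
      ‖x₂‖ ≤ 1 / (6 * M ^ 2) → |φ x₁ - φ x₂| ≤ 2 * M * ‖x₁ - x₂‖ := by
    intro x₁ x₂ h1 h2
    have hx₂b : ‖x₂‖ ≤ 1 / (2 * M) := h2.trans hb23
    have key := habs x₂ hx₂b (φ x₁) (φ x₂) (hφbb x₁ h1) (hφbb x₂ h2)
    rw [(hφspec x₂ h2).2, sub_zero] at key
    have h3 : |F (x₂, φ x₁)| = |F (x₂, φ x₁) - F (x₁, φ x₁)| := by
      rw [(hφspec x₁ h1).2, sub_zero]
    have h4 : |F (x₂, φ x₁) - F (x₁, φ x₁)| ≤ M * ‖x₁ - x₂‖ := by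
      refine (hFsub (x₁, φ x₁) (x₂, φ x₁)).trans ?_
      gcongr
      rw [Prod.mk_sub_mk, sub_self, Prod.norm_def]
      simp [norm_sub_rev]
    calc |φ x₁ - φ x₂| ≤ 2 * |F (x₂, φ x₁)| := key
      _ = 2 * |F (x₂, φ x₁) - F (x₁, φ x₁)| := by rw [h3]
      _ ≤ 2 * (M * ‖x₁ - x₂‖) := by gcongr
      _ = 2 * M * ‖x₁ - x₂‖ := by ring
  -- pair distance bound
  have hpdiff : ∀ x₁ x₂ : EuclideanSpace ℝ (Fin m), ‖x₁‖ ≤ 1 / (6 * M ^ 2) →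
      ‖x₂‖ ≤ 1 / (6 * M ^ 2) →
      ‖((x₁, φ x₁) : EuclideanSpace ℝ (Fin m) × ℝ) - (x₂, φ x₂)‖ ≤ 2 * M * ‖x₁ - x₂‖ := by
    intro x₁ x₂ h1 h2
    rw [Prod.mk_sub_mk, Prod.norm_def]
    refine max_le ?_ ?_
    · exact le_mul_of_one_le_left (norm_nonneg _) (by linarith)
    · simpa using hφlip x₁ x₂ h1 h2
  have hinv2 : ∀ t : ℝ, 1 / 2 ≤ t → t⁻¹ ≤ 2 := by
    intro t ht
    rw [inv_eq_one_div]
    calc 1 / t ≤ 1 / (1 / 2) := one_div_le_one_div_of_le (by norm_num) ht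
      _ = 2 := by norm_num
  have hLv : ∀ (p : EuclideanSpace ℝ (Fin m) × ℝ) (v : EuclideanSpace ℝ (Fin m)),
      |L p ((v, 0) : EuclideanSpace ℝ (Fin m) × ℝ)| ≤ M * ‖v‖ := by
    intro p v
    calc |L p ((v, 0) : EuclideanSpace ℝ (Fin m) × ℝ)| ≤ ‖L p‖ * ‖((v, 0) : EuclideanSpace ℝ (Fin m) × ℝ)‖ :=
          (L p).le_opNorm _
      _ ≤ M * ‖v‖ := by
          rw [Prod.norm_def]
          simp only [norm_zero]
          rw [max_eq_left (norm_nonneg v)]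
          gcongr
          exact hFd p
  have hLvd : ∀ (p q : EuclideanSpace ℝ (Fin m) × ℝ) (v : EuclideanSpace ℝ (Fin m)),
      |L p ((v, 0) : EuclideanSpace ℝ (Fin m) × ℝ) - L q ((v, 0) : EuclideanSpace ℝ (Fin m) × ℝ)|
        ≤ M * ‖p - q‖ * ‖v‖ := by
    intro p q v
    calc |L p ((v, 0) : EuclideanSpace ℝ (Fin m) × ℝ) - L q ((v, 0) : EuclideanSpace ℝ (Fin m) × ℝ)|
        = |(L p - L q) ((v, 0) : EuclideanSpace ℝ (Fin m) × ℝ)| := by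
          simp
      _ ≤ ‖L p - L q‖ * ‖((v, 0) : EuclideanSpace ℝ (Fin m) × ℝ)‖ := (L p - L q).le_opNorm _
      _ ≤ (M * ‖p - q‖) * ‖v‖ := by
          rw [Prod.norm_def]
          simp only [norm_zero]
          rw [max_eq_left (norm_nonneg v)]
          gcongr
          exact hLsub q p
      _ = M * ‖p - q‖ * ‖v‖ := by ring
  -- the derivative candidate
  have hd0 : ∀ x₀ : EuclideanSpace ℝ (Fin m), ‖x₀‖ ≤ 1 / (6 * M ^ 2) →
      1 / 2 ≤ d (x₀, φ x₀) :=
    fun x₀ h => hdlow _ (hboxnorm _ _ (h.trans hb23) (hφbb x₀ h))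
  have hquadA : ∀ x₀ : EuclideanSpace ℝ (Fin m), ‖x₀‖ ≤ 1 / (8 * M ^ 2) →
      HasFDerivAt φ ((-(d (x₀, φ x₀))⁻¹) •
        ((L (x₀, φ x₀)).comp (ContinuousLinearMap.inl ℝ (EuclideanSpace ℝ (Fin m)) ℝ))) x₀ := by
    intro x₀ hx₀
    have hx₀6 : ‖x₀‖ ≤ 1 / (6 * M ^ 2) := hx₀.trans h86
    have hd₀ : 1 / 2 ≤ d (x₀, φ x₀) := hd0 x₀ hx₀6
    have hd₀pos : 0 < d (x₀, φ x₀) := by linarith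
    refine aux_quad_fderiv φ
      ((-(d (x₀, φ x₀))⁻¹) •
        ((L (x₀, φ x₀)).comp (ContinuousLinearMap.inl ℝ (EuclideanSpace ℝ (Fin m)) ℝ)))
      x₀ (8 * M ^ 3) (1 / (24 * M ^ 2)) (by positivity) (by positivity) ?_
    intro x hxr
    have hx6 : ‖x‖ ≤ 1 / (6 * M ^ 2) := by
      have h1 : ‖x‖ - ‖x₀‖ ≤ ‖x - x₀‖ := norm_sub_norm_le x x₀
      have heq : 1 / (8 * M ^ 2) + 1 / (24 * M ^ 2) = 1 / (6 * M ^ 2) := by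
        field_simp
        ring
      linarith [hxr.le]
    have ht := htay (x₀, φ x₀) (x, φ x)
    rw [(hφspec x hx6).2, (hφspec x₀ hx₀6).2] at ht
    have hsplit : (L (x₀, φ x₀)) (((x, φ x) : EuclideanSpace ℝ (Fin m) × ℝ) - (x₀, φ x₀))
        = L (x₀, φ x₀) ((x - x₀, 0) : EuclideanSpace ℝ (Fin m) × ℝ)
          + (φ x - φ x₀) * d (x₀, φ x₀) := by
      have heq : ((x, φ x) : EuclideanSpace ℝ (Fin m) × ℝ) - (x₀, φ x₀)
          = ((x - x₀, (0:ℝ)) : EuclideanSpace ℝ (Fin m) × ℝ)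
            + (φ x - φ x₀) • (((0 : EuclideanSpace ℝ (Fin m)), (1:ℝ)) : EuclideanSpace ℝ (Fin m) × ℝ) := by
        rw [Prod.mk_sub_mk, Prod.smul_mk, Prod.mk_add_mk]
        simp
      rw [heq, map_add, map_smul, smul_eq_mul]
    have hqn : ‖((x, φ x) : EuclideanSpace ℝ (Fin m) × ℝ) - (x₀, φ x₀)‖ ≤ 2 * M * ‖x - x₀‖ :=
      hpdiff x x₀ hx6 hx₀6
    have key : |L (x₀, φ x₀) ((x - x₀, 0) : EuclideanSpace ℝ (Fin m) × ℝ)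
        + (φ x - φ x₀) * d (x₀, φ x₀)| ≤ M * (2 * M * ‖x - x₀‖) ^ 2 := by
      rw [← hsplit]
      have h1 : |(0:ℝ) - 0 - L (x₀, φ x₀) (((x, φ x) : EuclideanSpace ℝ (Fin m) × ℝ) - (x₀, φ x₀))|
          = |L (x₀, φ x₀) (((x, φ x) : EuclideanSpace ℝ (Fin m) × ℝ) - (x₀, φ x₀))| := by
        rw [sub_zero, zero_sub, abs_neg]
      rw [h1] at ht
      refine ht.trans ?_
      have h0 := norm_nonneg (((x, φ x) : EuclideanSpace ℝ (Fin m) × ℝ) - (x₀, φ x₀))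
      have hsq := pow_le_pow_left₀ h0 hqn 2
      exact mul_le_mul_of_nonneg_left hsq hM0.le
    have hAval : ((-(d (x₀, φ x₀))⁻¹) •
        ((L (x₀, φ x₀)).comp (ContinuousLinearMap.inl ℝ (EuclideanSpace ℝ (Fin m)) ℝ))) (x - x₀)
        = -(d (x₀, φ x₀))⁻¹ * L (x₀, φ x₀) ((x - x₀, 0) : EuclideanSpace ℝ (Fin m) × ℝ) := by
      simp [ContinuousLinearMap.smul_apply, ContinuousLinearMap.comp_apply,
        ContinuousLinearMap.inl_apply, smul_eq_mul]
    rw [Real.norm_eq_abs, hAval]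
    have heq2 : φ x - φ x₀ - (-(d (x₀, φ x₀))⁻¹ * L (x₀, φ x₀) ((x - x₀, 0) : EuclideanSpace ℝ (Fin m) × ℝ))
        = (d (x₀, φ x₀))⁻¹ * (L (x₀, φ x₀) ((x - x₀, 0) : EuclideanSpace ℝ (Fin m) × ℝ)
            + (φ x - φ x₀) * d (x₀, φ x₀)) := by
      field_simp
      ring
    rw [heq2, abs_mul, abs_inv, abs_of_pos hd₀pos]
    have hinv : (d (x₀, φ x₀))⁻¹ ≤ 2 := hinv2 _ hd₀
    calc (d (x₀, φ x₀))⁻¹ * |L (x₀, φ x₀) ((x - x₀, 0) : EuclideanSpace ℝ (Fin m) × ℝ)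
          + (φ x - φ x₀) * d (x₀, φ x₀)|
        ≤ 2 * (M * (2 * M * ‖x - x₀‖) ^ 2) := by
          apply mul_le_mul hinv key (abs_nonneg _) (by norm_num)
      _ = 8 * M ^ 3 * ‖x - x₀‖ ^ 2 := by ring
  have hfderiv : ∀ x₀ : EuclideanSpace ℝ (Fin m), ‖x₀‖ ≤ 1 / (8 * M ^ 2) →
      fderiv ℝ φ x₀ = (-(d (x₀, φ x₀))⁻¹) •
        ((L (x₀, φ x₀)).comp (ContinuousLinearMap.inl ℝ (EuclideanSpace ℝ (Fin m)) ℝ)) :=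
    fun x₀ h => (hquadA x₀ h).fderiv
  have hM4 : (1:ℝ) ≤ M ^ 4 := one_le_pow₀ hM1
  refine ⟨φ, ?_, ?_, ?_⟩
  · -- existence and uniqueness
    intro x hx
    have hx6 : ‖x‖ ≤ 1 / (6 * M ^ 2) := hx.trans h86
    refine ⟨hφbb x hx6, (hφspec x hx6).2, ?_⟩
    intro y hy hFy
    have h1 := habs x (hx6.trans hb23) y (φ x) hy (hφbb x hx6)
    rw [hFy, (hφspec x hx6).2, sub_zero, abs_zero] at h1
    have : |y - φ x| = 0 := le_antisymm (by linarith) (abs_nonneg _)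
    have := abs_eq_zero.1 this
    linarith [sub_eq_zero.1 this]
  · -- bounds on φ and its derivative
    intro x hx
    have hx6 : ‖x‖ ≤ 1 / (6 * M ^ 2) := hx.trans h86
    have hd₀ : 1 / 2 ≤ d (x, φ x) := hd0 x hx6
    have hd₀pos : 0 < d (x, φ x) := by linarith
    refine ⟨?_, (hquadA x hx).differentiableAt, ?_⟩
    · have h1 : |φ x| ≤ 1 / (2 * M) := hφbb x hx6
      have h2 : (1:ℝ) / (2 * M) ≤ 1 := by
        rw [div_le_one (by linarith)]
        linarith
      nlinarith
    · rw [hfderiv x hx]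
      refine ContinuousLinearMap.opNorm_le_bound _ (by positivity) ?_
      intro v
      have hval : ((-(d (x, φ x))⁻¹) •
          ((L (x, φ x)).comp (ContinuousLinearMap.inl ℝ (EuclideanSpace ℝ (Fin m)) ℝ))) v
          = -(d (x, φ x))⁻¹ * L (x, φ x) ((v, 0) : EuclideanSpace ℝ (Fin m) × ℝ) := by
        simp [ContinuousLinearMap.smul_apply, ContinuousLinearMap.comp_apply,
          ContinuousLinearMap.inl_apply, smul_eq_mul]
      rw [hval, Real.norm_eq_abs, abs_mul, abs_neg, abs_inv,
        abs_of_pos hd₀pos]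
      have hinv : (d (x, φ x))⁻¹ ≤ 2 := hinv2 _ hd₀
      calc (d (x, φ x))⁻¹ * |L (x, φ x) ((v, 0) : EuclideanSpace ℝ (Fin m) × ℝ)|
          ≤ 2 * (M * ‖v‖) :=
            mul_le_mul hinv (hLv _ v) (abs_nonneg _) (by norm_num)
        _ = (2 * M) * ‖v‖ := by ring
        _ ≤ 100 * M ^ 4 * ‖v‖ := by
            have hMM : M ≤ M ^ 4 := le_self_pow₀ hM1 (by norm_num)
            have h24 : 2 * M ≤ 100 * M ^ 4 := by linarith
            exact mul_le_mul_of_nonneg_right h24 (norm_nonneg v)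
  · -- Lipschitz bound on the derivative
    intro x₁ x₂ h1 h2
    rw [hfderiv x₁ h1, hfderiv x₂ h2]
    have h16 : ‖x₁‖ ≤ 1 / (6 * M ^ 2) := h1.trans h86
    have h26 : ‖x₂‖ ≤ 1 / (6 * M ^ 2) := h2.trans h86
    have hd₁ : 1 / 2 ≤ d (x₁, φ x₁) := hd0 x₁ h16
    have hd₂ : 1 / 2 ≤ d (x₂, φ x₂) := hd0 x₂ h26
    have hd₁pos : 0 < d (x₁, φ x₁) := by linarith
    have hd₂pos : 0 < d (x₂, φ x₂) := by linarith
    have hinv1 : (d (x₁, φ x₁))⁻¹ ≤ 2 := hinv2 _ hd₁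
    have hinv2' : (d (x₂, φ x₂))⁻¹ ≤ 2 := hinv2 _ hd₂
    have hpd : ‖((x₁, φ x₁) : EuclideanSpace ℝ (Fin m) × ℝ) - (x₂, φ x₂)‖ ≤ 2 * M * ‖x₁ - x₂‖ :=
      hpdiff x₁ x₂ h16 h26
    have hdd : |d (x₁, φ x₁) - d (x₂, φ x₂)| ≤ 2 * M ^ 2 * ‖x₁ - x₂‖ := by
      refine (hdsub _ _).trans ?_
      calc M * ‖((x₁, φ x₁) : EuclideanSpace ℝ (Fin m) × ℝ) - (x₂, φ x₂)‖
          ≤ M * (2 * M * ‖x₁ - x₂‖) := by gcongr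
        _ = 2 * M ^ 2 * ‖x₁ - x₂‖ := by ring
    refine ContinuousLinearMap.opNorm_le_bound _ (by positivity) ?_
    intro v
    rw [ContinuousLinearMap.sub_apply]
    have hval1 : ((-(d (x₁, φ x₁))⁻¹) •
        ((L (x₁, φ x₁)).comp (ContinuousLinearMap.inl ℝ (EuclideanSpace ℝ (Fin m)) ℝ))) v
        = -(d (x₁, φ x₁))⁻¹ * L (x₁, φ x₁) ((v, 0) : EuclideanSpace ℝ (Fin m) × ℝ) := by
      simp [ContinuousLinearMap.smul_apply, ContinuousLinearMap.comp_apply,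
        ContinuousLinearMap.inl_apply, smul_eq_mul]
    have hval2 : ((-(d (x₂, φ x₂))⁻¹) •
        ((L (x₂, φ x₂)).comp (ContinuousLinearMap.inl ℝ (EuclideanSpace ℝ (Fin m)) ℝ))) v
        = -(d (x₂, φ x₂))⁻¹ * L (x₂, φ x₂) ((v, 0) : EuclideanSpace ℝ (Fin m) × ℝ) := by
      simp [ContinuousLinearMap.smul_apply, ContinuousLinearMap.comp_apply,
        ContinuousLinearMap.inl_apply, smul_eq_mul]
    rw [hval1, hval2, Real.norm_eq_abs]
    set d₁ := d (x₁, φ x₁)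
    set d₂ := d (x₂, φ x₂)
    set u₁ := L (x₁, φ x₁) ((v, 0) : EuclideanSpace ℝ (Fin m) × ℝ)
    set u₂ := L (x₂, φ x₂) ((v, 0) : EuclideanSpace ℝ (Fin m) × ℝ)
    have heqq : -d₁⁻¹ * u₁ - -d₂⁻¹ * u₂ = d₁⁻¹ * (u₂ - u₁) + (d₂⁻¹ - d₁⁻¹) * u₂ := by ring
    have hu12 : |u₂ - u₁| ≤ 2 * M ^ 2 * ‖x₁ - x₂‖ * ‖v‖ := by
      refine (hLvd _ _ v).trans ?_
      have : ‖((x₂, φ x₂) : EuclideanSpace ℝ (Fin m) × ℝ) - (x₁, φ x₁)‖ ≤ 2 * M * ‖x₁ - x₂‖ := by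
        rw [show ‖((x₂, φ x₂) : EuclideanSpace ℝ (Fin m) × ℝ) - (x₁, φ x₁)‖
            = ‖((x₁, φ x₁) : EuclideanSpace ℝ (Fin m) × ℝ) - (x₂, φ x₂)‖ from norm_sub_rev _ _]
        exact hpd
      calc M * ‖((x₂, φ x₂) : EuclideanSpace ℝ (Fin m) × ℝ) - (x₁, φ x₁)‖ * ‖v‖
          ≤ M * (2 * M * ‖x₁ - x₂‖) * ‖v‖ := by gcongr
        _ = 2 * M ^ 2 * ‖x₁ - x₂‖ * ‖v‖ := by ring
    have hu2 : |u₂| ≤ M * ‖v‖ := hLv _ v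
    have hddinv : |d₂⁻¹ - d₁⁻¹| ≤ 8 * M ^ 2 * ‖x₁ - x₂‖ := by
      have e1 : d₁ * d₁⁻¹ = 1 := mul_inv_cancel₀ (ne_of_gt hd₁pos)
      have e2 : d₂ * d₂⁻¹ = 1 := mul_inv_cancel₀ (ne_of_gt hd₂pos)
      have heq3 : d₂⁻¹ - d₁⁻¹ = (d₁ - d₂) * d₁⁻¹ * d₂⁻¹ := by
        linear_combination (-(d₂⁻¹)) * e1 + d₁⁻¹ * e2
      rw [heq3, abs_mul, abs_mul, abs_inv, abs_inv, abs_of_pos hd₁pos, abs_of_pos hd₂pos]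
      calc |d₁ - d₂| * d₁⁻¹ * d₂⁻¹ ≤ (2 * M ^ 2 * ‖x₁ - x₂‖) * 2 * 2 :=
            mul_le_mul (mul_le_mul hdd hinv1 (inv_nonneg.2 hd₁pos.le) (by positivity))
              hinv2' (inv_nonneg.2 hd₂pos.le) (by positivity)
        _ = 8 * M ^ 2 * ‖x₁ - x₂‖ := by ring
    rw [heqq]
    have hterm1 : |d₁⁻¹ * (u₂ - u₁)| ≤ 2 * (2 * M ^ 2 * ‖x₁ - x₂‖ * ‖v‖) := by
      rw [abs_mul, abs_inv, abs_of_pos hd₁pos]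
      exact mul_le_mul hinv1 hu12 (abs_nonneg _) (by norm_num)
    have hterm2 : |(d₂⁻¹ - d₁⁻¹) * u₂| ≤ (8 * M ^ 2 * ‖x₁ - x₂‖) * (M * ‖v‖) := by
      rw [abs_mul]
      exact mul_le_mul hddinv hu2 (abs_nonneg _) (by positivity)
    calc |d₁⁻¹ * (u₂ - u₁) + (d₂⁻¹ - d₁⁻¹) * u₂|
        ≤ |d₁⁻¹ * (u₂ - u₁)| + |(d₂⁻¹ - d₁⁻¹) * u₂| := abs_add_le _ _
      _ ≤ 2 * (2 * M ^ 2 * ‖x₁ - x₂‖ * ‖v‖) + (8 * M ^ 2 * ‖x₁ - x₂‖) * (M * ‖v‖) := by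
          linarith
      _ = (4 * M ^ 2 + 8 * M ^ 3) * (‖x₁ - x₂‖ * ‖v‖) := by ring
      _ ≤ (100 * M ^ 4) * (‖x₁ - x₂‖ * ‖v‖) := by
          have hnn : 0 ≤ ‖x₁ - x₂‖ * ‖v‖ := by positivity
          have : 4 * M ^ 2 + 8 * M ^ 3 ≤ 100 * M ^ 4 := by nlinarith
          exact mul_le_mul_of_nonneg_right this hnn
      _ = 100 * M ^ 4 * ‖x₁ - x₂‖ * ‖v‖ := by ring
end

section
/- In the setting of the quantitative C^{1,1} implicit function theorem, one can write F(x,y) = A(x,y)(y − φ(x)) where A(x,y) = ∫₀¹ ∂_y F(x, s(y − φ(x)) + φ(x)) ds is Lipschitz on the box and A(x,y) ≥ 1/2 there. -/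
open MeasureTheory intervalIntegral

/-- In the setting of the quantitative `C^{1,1}` implicit function theorem, one can write
`F(x,y) = A(x,y)(y − φ(x))` on the box, where
`A(x,y) = ∫₀¹ ∂_y F(x, s(y − φ(x)) + φ(x)) ds` satisfies `A ≥ 1/2` and is Lipschitz there. -/
theorem implicit_function_factorization (m : ℕ)
    (F : EuclideanSpace ℝ (Fin m) × ℝ → ℝ) (M : ℝ)
    (hC1 : ContDiff ℝ 1 F)
    (hbd : ∀ p, |F p| ≤ M) (hbd1 : ∀ p, ‖fderiv ℝ F p‖ ≤ M)
    (hlip : LipschitzWith (Real.toNNReal M) (fderiv ℝ F))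
    (hF0 : F (0, 0) = 0) (hFy0 : fderiv ℝ F (0, 0) (0, 1) = 1)
    (a b : ℝ) (ha : 0 < a) (hb : 0 < b)
    (φ : EuclideanSpace ℝ (Fin m) → ℝ) (Kφ : NNReal) (hφlip : LipschitzWith Kφ φ)
    (hφ : ∀ x, ‖x‖ ≤ a → |φ x| ≤ b ∧ F (x, φ x) = 0)
    (hFy : ∀ x y, ‖x‖ ≤ a → |y| ≤ b → (1 / 2 : ℝ) ≤ fderiv ℝ F (x, y) (0, 1)) :
    (∀ x y, ‖x‖ ≤ a → |y| ≤ b →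
      F (x, y) =
        (∫ s in (0 : ℝ)..1, fderiv ℝ F (x, s * (y - φ x) + φ x) (0, 1)) * (y - φ x) ∧
      (1 / 2 : ℝ) ≤ ∫ s in (0 : ℝ)..1, fderiv ℝ F (x, s * (y - φ x) + φ x) (0, 1)) ∧
    (∃ L : ℝ, 0 < L ∧ ∀ x y x' y', ‖x‖ ≤ a → |y| ≤ b → ‖x'‖ ≤ a → |y'| ≤ b →
      |(∫ s in (0 : ℝ)..1, fderiv ℝ F (x, s * (y - φ x) + φ x) (0, 1)) -
          (∫ s in (0 : ℝ)..1, fderiv ℝ F (x', s * (y' - φ x') + φ x') (0, 1))| ≤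
        L * (‖x - x'‖ + |y - y'|)) := by
  have hdiff : Differentiable ℝ F := hC1.differentiable one_ne_zero
  have hcont : Continuous (fun p => fderiv ℝ F p) := hlip.continuous
  set G : EuclideanSpace ℝ (Fin m) × ℝ → ℝ := fun p => fderiv ℝ F p (0, 1) with hG
  have hn1 : ‖((0 : EuclideanSpace ℝ (Fin m)), (1 : ℝ))‖ = 1 := by simp [Prod.norm_def]
  have hM0 : 0 ≤ M := le_trans (abs_nonneg _) (hbd (0, 0))
  have hGcont : Continuous G :=
    (ContinuousLinearMap.apply ℝ ℝ ((0 : EuclideanSpace ℝ (Fin m)), (1 : ℝ))).continuous.comp hcont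
  have hGlip : ∀ p q : EuclideanSpace ℝ (Fin m) × ℝ, |G p - G q| ≤ M * ‖p - q‖ := by
    intro p q
    have h1 : G p - G q =
        (fderiv ℝ F p - fderiv ℝ F q) ((0 : EuclideanSpace ℝ (Fin m)), (1 : ℝ)) := by
      simp [hG]
    rw [h1]
    calc |(fderiv ℝ F p - fderiv ℝ F q) ((0 : EuclideanSpace ℝ (Fin m)), (1 : ℝ))|
        ≤ ‖fderiv ℝ F p - fderiv ℝ F q‖ * ‖((0 : EuclideanSpace ℝ (Fin m)), (1 : ℝ))‖ :=
          (fderiv ℝ F p - fderiv ℝ F q).le_opNorm _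
      _ ≤ M * ‖p - q‖ := by
          rw [hn1, mul_one]
          have := hlip.dist_le_mul p q
          rw [dist_eq_norm, dist_eq_norm] at this
          simpa [Real.coe_toNNReal M hM0] using this
  have hcont' : ∀ (x : EuclideanSpace ℝ (Fin m)) (c d : ℝ),
      Continuous (fun s : ℝ => G (x, s * c + d)) := by
    intro x c d
    exact hGcont.comp (continuous_const.prodMk ((continuous_id.mul continuous_const).add
      continuous_const))
  have hii : ∀ (x : EuclideanSpace ℝ (Fin m)) (c d : ℝ),
      IntervalIntegrable (fun s : ℝ => G (x, s * c + d)) volume 0 1 :=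
    fun x c d => (hcont' x c d).intervalIntegrable 0 1
  constructor
  · intro x y hx hy
    set c := y - φ x with hc
    have hφx := hφ x hx
    have habs : ∀ s : ℝ, 0 ≤ s → s ≤ 1 → |s * c + φ x| ≤ b := by
      intro s hs0 hs1
      have h1 := abs_le.mp hy
      have h2 := abs_le.mp hφx.1
      rw [hc, abs_le]
      constructor
      · nlinarith [mul_le_mul_of_nonneg_left h1.1 hs0,
          mul_le_mul_of_nonneg_left h2.1 (by linarith : (0:ℝ) ≤ 1 - s)]
      · nlinarith [mul_le_mul_of_nonneg_left h1.2 hs0,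
          mul_le_mul_of_nonneg_left h2.2 (by linarith : (0:ℝ) ≤ 1 - s)]
    constructor
    · have hderiv : ∀ t ∈ Set.uIcc (0 : ℝ) 1,
          HasDerivAt (fun t : ℝ => F (x, t * c + φ x)) (c * G (x, t * c + φ x)) t := by
        intro t _
        have h1 : HasDerivAt
            (fun t : ℝ => ((x, t * c + φ x) : EuclideanSpace ℝ (Fin m) × ℝ))
            ((0 : EuclideanSpace ℝ (Fin m)), c) t :=
          (hasDerivAt_const t x).prodMk ((hasDerivAt_mul_const c).add_const (φ x))
        have h2 := (hdiff (x, t * c + φ x)).hasFDerivAt.comp_hasDerivAt t h1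
        have h4 : fderiv ℝ F (x, t * c + φ x) ((0 : EuclideanSpace ℝ (Fin m)), c) =
            c * G (x, t * c + φ x) := by
          have h3 : ((0 : EuclideanSpace ℝ (Fin m)), c) =
              c • ((0 : EuclideanSpace ℝ (Fin m)), (1 : ℝ)) := by simp
          rw [h3, ContinuousLinearMap.map_smul]
          simp [hG, smul_eq_mul, mul_comm]
        rw [h4] at h2
        exact h2
      have hfi : IntervalIntegrable (fun t : ℝ => c * G (x, t * c + φ x)) volume 0 1 :=
        (hii x c (φ x)).const_mul c
      have key := intervalIntegral.integral_eq_sub_of_hasDerivAt hderiv hfi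
      rw [intervalIntegral.integral_const_mul] at key
      simp only [one_mul, zero_mul, zero_add] at key
      have hy1 : c + φ x = y := by rw [hc]; ring
      rw [hy1, hφx.2, sub_zero] at key
      rw [← key]; ring
    · have h12 : (1 / 2 : ℝ) = ∫ _ in (0 : ℝ)..1, (1 / 2 : ℝ) := by simp
      rw [h12]
      exact intervalIntegral.integral_mono_on (by norm_num) intervalIntegrable_const
        (hii x c (φ x)) (fun s hs => hFy x (s * c + φ x) hx (habs s hs.1 hs.2))
  · have hM1 : (1 : ℝ) ≤ M := by
      have h1 : |fderiv ℝ F (0, 0) ((0 : EuclideanSpace ℝ (Fin m)), (1 : ℝ))| ≤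
          ‖fderiv ℝ F (0, 0)‖ * ‖((0 : EuclideanSpace ℝ (Fin m)), (1 : ℝ))‖ :=
        (fderiv ℝ F (0, 0)).le_opNorm _
      rw [hFy0, hn1, mul_one, abs_one] at h1
      exact h1.trans (hbd1 (0, 0))
    refine ⟨M * (1 + Kφ), by positivity, ?_⟩
    intro x y x' y' hx hy hx' hy'
    have hsub : (∫ s in (0 : ℝ)..1, G (x, s * (y - φ x) + φ x)) -
        (∫ s in (0 : ℝ)..1, G (x', s * (y' - φ x') + φ x')) =
        ∫ s in (0 : ℝ)..1, (G (x, s * (y - φ x) + φ x) - G (x', s * (y' - φ x') + φ x')) :=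
      (intervalIntegral.integral_sub (hii x _ _) (hii x' _ _)).symm
    rw [hsub, ← Real.norm_eq_abs]
    have hbound : ∀ s ∈ Set.uIoc (0 : ℝ) 1,
        ‖G (x, s * (y - φ x) + φ x) - G (x', s * (y' - φ x') + φ x')‖ ≤
          M * (1 + Kφ) * (‖x - x'‖ + |y - y'|) := by
      intro s hs
      rw [Set.uIoc_of_le (by norm_num : (0:ℝ) ≤ 1)] at hs
      obtain ⟨hs0, hs1⟩ := hs
      rw [Real.norm_eq_abs]
      have h1 := hGlip (x, s * (y - φ x) + φ x) (x', s * (y' - φ x') + φ x')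
      refine h1.trans ?_
      have hpn : ‖((x, s * (y - φ x) + φ x) : EuclideanSpace ℝ (Fin m) × ℝ) -
          (x', s * (y' - φ x') + φ x')‖ ≤
          ‖x - x'‖ + |s * (y - φ x) + φ x - (s * (y' - φ x') + φ x')| := by
        rw [Prod.mk_sub_mk, Prod.norm_def]
        exact max_le (le_add_of_nonneg_right (abs_nonneg _))
          (le_add_of_nonneg_left (norm_nonneg _))
      have hφd : |φ x - φ x'| ≤ (Kφ : ℝ) * ‖x - x'‖ := by
        have := hφlip.dist_le_mul x x'
        rwa [dist_eq_norm, dist_eq_norm, Real.norm_eq_abs] at this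
      have h2 : |s * (y - φ x) + φ x - (s * (y' - φ x') + φ x')| ≤
          |y - y'| + (Kφ : ℝ) * ‖x - x'‖ := by
        have heq : s * (y - φ x) + φ x - (s * (y' - φ x') + φ x') =
            s * (y - y') + (1 - s) * (φ x - φ x') := by ring
        rw [heq]
        calc |s * (y - y') + (1 - s) * (φ x - φ x')|
            ≤ |s * (y - y')| + |(1 - s) * (φ x - φ x')| := abs_add_le _ _
          _ = s * |y - y'| + (1 - s) * |φ x - φ x'| := by
              rw [abs_mul, abs_mul, abs_of_pos hs0, abs_of_nonneg (show (0:ℝ) ≤ 1 - s by linarith)]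
          _ ≤ |y - y'| + (Kφ : ℝ) * ‖x - x'‖ := by
              have ha1 : s * |y - y'| ≤ |y - y'| :=
                mul_le_of_le_one_left (abs_nonneg _) hs1
              have ha2 : (1 - s) * |φ x - φ x'| ≤ (Kφ : ℝ) * ‖x - x'‖ := by
                have := mul_le_of_le_one_left (abs_nonneg (φ x - φ x'))
                  (by linarith : (1:ℝ) - s ≤ 1)
                exact this.trans hφd
              linarith
      have hK0 : (0 : ℝ) ≤ Kφ := Kφ.coe_nonneg
      have h3 : ‖((x, s * (y - φ x) + φ x) : EuclideanSpace ℝ (Fin m) × ℝ) -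
          (x', s * (y' - φ x') + φ x')‖ ≤ ‖x - x'‖ + (|y - y'| + (Kφ : ℝ) * ‖x - x'‖) :=
        hpn.trans (by linarith)
      have h4 := mul_le_mul_of_nonneg_left h3 hM0
      nlinarith [norm_nonneg (x - x'), abs_nonneg (y - y'),
        mul_nonneg (mul_nonneg hM0 hK0) (abs_nonneg (y - y'))]
    calc ‖∫ s in (0:ℝ)..1, (G (x, s * (y - φ x) + φ x) - G (x', s * (y' - φ x') + φ x'))‖
        ≤ M * (1 + Kφ) * (‖x - x'‖ + |y - y'|) * |(1:ℝ) - 0| :=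
          intervalIntegral.norm_integral_le_of_norm_le_const hbound
      _ = M * (1 + Kφ) * (‖x - x'‖ + |y - y'|) := by simp
end
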